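/- arXiv:1805.09887 — 3 statements merged into one kernel-verified Lean document; each statement's English description precedes it below -/
import Mathlib

section
/- Let I be an instance of SPA-ST and let M be a matching in I. Then M is super-stable in I if and only if M is a stable matching in every instance of SPA-S obtained from I by breaking the ties. -/
open scoped Classical

/-- An instance of the Student-Project Allocation problem with lecturer
preferences over students, with Ties (SPA-ST).  `sPref s p q` means student `s`
ranks project `p` at least as highly as project `q` (`p ⪰_s q`); `lPref k t t'`
means lecturer `k` ranks student `t` at least as highly as student `t'`. -/
structure SPAST (S P L : Type) [Fintype S] [Fintype P] [Fintype L]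
    [DecidableEq S] [DecidableEq P] [DecidableEq L] where
  /-- the lecturer offering each project -/
  lec : P → L
  /-- project capacities -/
  c : P → ℕ
  /-- lecturer capacities -/
  d : L → ℕ
  cpos : ∀ p : P, 0 < c p
  dpos : ∀ k : L, 0 < d k
  /-- the set of projects acceptable to each student -/
  acc : S → Finset P
  sPref : S → P → P → Prop
  lPref : L → S → S → Prop
  sRefl : ∀ s : S, ∀ p ∈ acc s, sPref s p p
  sTrans : ∀ s : S, ∀ p ∈ acc s, ∀ q ∈ acc s, ∀ r ∈ acc s,
    sPref s p q → sPref s q r → sPref s p r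
  sTotal : ∀ s : S, ∀ p ∈ acc s, ∀ q ∈ acc s, sPref s p q ∨ sPref s q p
  lRefl : ∀ k : L, ∀ t : S, (∃ p ∈ acc t, lec p = k) → lPref k t t
  lTrans : ∀ k : L, ∀ t1 t2 t3 : S,
    (∃ p ∈ acc t1, lec p = k) → (∃ p ∈ acc t2, lec p = k) → (∃ p ∈ acc t3, lec p = k) →
    lPref k t1 t2 → lPref k t2 t3 → lPref k t1 t3
  lTotal : ∀ k : L, ∀ t1 t2 : S,
    (∃ p ∈ acc t1, lec p = k) → (∃ p ∈ acc t2, lec p = k) →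
    lPref k t1 t2 ∨ lPref k t2 t1
  capLB : ∀ p : P, c p ≤ d (lec p)
  capUB : ∀ k : L, d k ≤ ∑ p ∈ Finset.univ.filter (fun p => lec p = k), c p

namespace SPAST

variable {S P L : Type} [Fintype S] [Fintype P] [Fintype L]
  [DecidableEq S] [DecidableEq P] [DecidableEq L]

/-- `M` is a matching: pairs are acceptable, each student is matched at most once,
and project and lecturer capacities are respected. -/
def IsMatching (I : SPAST S P L) (M : Finset (S × P)) : Prop :=
  (∀ x ∈ M, x.2 ∈ I.acc x.1) ∧
  (∀ s : S, ∀ p q : P, (s, p) ∈ M → (s, q) ∈ M → p = q) ∧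
  (∀ p : P, (M.filter (fun x => x.2 = p)).card ≤ I.c p) ∧
  (∀ k : L, (M.filter (fun x => I.lec x.2 = k)).card ≤ I.d k)

/-- The set `M(p)` of students assigned to project `p` in `M`. -/
def projAsg (M : Finset (S × P)) (p : P) : Finset S :=
  (M.filter (fun x => x.2 = p)).image Prod.fst

/-- The set `M(l_k)` of students assigned to lecturer `k` in `M`. -/
def lecAsg (I : SPAST S P L) (M : Finset (S × P)) (k : L) : Finset S :=
  (M.filter (fun x => I.lec x.2 = k)).image Prod.fst

/-- `t` is a least-preferred (worst) student of lecturer `k` in the set `T`. -/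
def WorstIn (I : SPAST S P L) (k : L) (T : Finset S) (t : S) : Prop :=
  t ∈ T ∧ ∀ t' ∈ T, I.lPref k t' t

/-- `(s, p)` is a super-blocking pair for `M`. -/
def SuperBlocking (I : SPAST S P L) (M : Finset (S × P)) (s : S) (p : P) : Prop :=
  p ∈ I.acc s ∧ (s, p) ∉ M ∧
  (∀ q : P, (s, q) ∈ M → ¬(I.sPref s q p ∧ ¬I.sPref s p q)) ∧
  (((projAsg M p).card < I.c p ∧ (lecAsg I M (I.lec p)).card < I.d (I.lec p)) ∨
   ((projAsg M p).card < I.c p ∧ (lecAsg I M (I.lec p)).card = I.d (I.lec p) ∧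
     (s ∈ lecAsg I M (I.lec p) ∨
      ∃ t : S, WorstIn I (I.lec p) (lecAsg I M (I.lec p)) t ∧ I.lPref (I.lec p) s t)) ∨
   ((projAsg M p).card = I.c p ∧
     ∃ t : S, WorstIn I (I.lec p) (projAsg M p) t ∧ I.lPref (I.lec p) s t))

/-- `(s, p)` is a weakly-blocking pair for `M`. -/
def WeakBlocking (I : SPAST S P L) (M : Finset (S × P)) (s : S) (p : P) : Prop :=
  p ∈ I.acc s ∧ (s, p) ∉ M ∧
  (∀ q : P, (s, q) ∈ M → I.sPref s p q ∧ ¬I.sPref s q p) ∧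
  (((projAsg M p).card < I.c p ∧ (lecAsg I M (I.lec p)).card < I.d (I.lec p)) ∨
   ((projAsg M p).card < I.c p ∧ (lecAsg I M (I.lec p)).card = I.d (I.lec p) ∧
     (s ∈ lecAsg I M (I.lec p) ∨
      ∃ t : S, WorstIn I (I.lec p) (lecAsg I M (I.lec p)) t ∧
        (I.lPref (I.lec p) s t ∧ ¬I.lPref (I.lec p) t s))) ∨
   ((projAsg M p).card = I.c p ∧
     ∃ t : S, WorstIn I (I.lec p) (projAsg M p) t ∧
       (I.lPref (I.lec p) s t ∧ ¬I.lPref (I.lec p) t s)))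

/-- `M` is a super-stable matching in `I`. -/
def SuperStable (I : SPAST S P L) (M : Finset (S × P)) : Prop :=
  I.IsMatching M ∧ ∀ (s : S) (p : P), ¬SuperBlocking I M s p

/-- `M` is a weakly stable matching in `I`. -/
def WeaklyStable (I : SPAST S P L) (M : Finset (S × P)) : Prop :=
  I.IsMatching M ∧ ∀ (s : S) (p : P), ¬WeakBlocking I M s p

/-- `I` is an SPA-S instance: all preference lists are strictly ordered
(the preorders are antisymmetric). -/
def StrictPrefs (I : SPAST S P L) : Prop :=
  (∀ s : S, ∀ p ∈ I.acc s, ∀ q ∈ I.acc s, I.sPref s p q → I.sPref s q p → p = q) ∧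
  (∀ k : L, ∀ t t' : S, (∃ p ∈ I.acc t, I.lec p = k) → (∃ p ∈ I.acc t', I.lec p = k) →
    I.lPref k t t' → I.lPref k t' t → t = t')

/-- `I'` is an SPA-S instance obtained from `I` by breaking the ties. -/
def TieBreaking (I I' : SPAST S P L) : Prop :=
  I'.lec = I.lec ∧ I'.c = I.c ∧ I'.d = I.d ∧ I'.acc = I.acc ∧
  StrictPrefs I' ∧
  (∀ (s : S) (p q : P), I.sPref s p q → ¬I.sPref s q p →
    I'.sPref s p q ∧ ¬I'.sPref s q p) ∧
  (∀ (k : L) (t t' : S), I.lPref k t t' → ¬I.lPref k t' t →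
    I'.lPref k t t' ∧ ¬I'.lPref k t' t)

end SPAST

section Aux

variable {α : Type*}

/-- Refinement of a preorder `r` by a numeric key `f`. -/
def refP (r : α → α → Prop) (f : α → ℕ) (a b : α) : Prop :=
  r a b ∧ (r b a → f a ≤ f b)

lemma refP_refl {r : α → α → Prop} {f : α → ℕ} {a : α} (h : r a a) : refP r f a a :=
  ⟨h, fun _ => le_rfl⟩

lemma refP_total {r : α → α → Prop} {f : α → ℕ} {a b : α} (h : r a b ∨ r b a) :
    refP r f a b ∨ refP r f b a := by
  by_cases h1 : r a b <;> by_cases h2 : r b a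
  · rcases le_total (f a) (f b) with h3 | h3
    · exact Or.inl ⟨h1, fun _ => h3⟩
    · exact Or.inr ⟨h2, fun _ => h3⟩
  · exact Or.inl ⟨h1, fun h' => absurd h' h2⟩
  · exact Or.inr ⟨h2, fun h' => absurd h' h1⟩
  · rcases h with h | h
    exacts [absurd h h1, absurd h h2]

lemma refP_trans {r : α → α → Prop} {f : α → ℕ} {a b c : α}
    (tr1 : r a b → r b c → r a c) (tr2 : r c a → r a b → r c b)
    (tr3 : r b c → r c a → r b a)
    (hab : refP r f a b) (hbc : refP r f b c) : refP r f a c :=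
  ⟨tr1 hab.1 hbc.1, fun hca => le_trans (hab.2 (tr3 hbc.1 hca)) (hbc.2 (tr2 hca hab.1))⟩

lemma refP_antisymm {r : α → α → Prop} {f : α → ℕ} (hf : Function.Injective f) {a b : α}
    (h1 : refP r f a b) (h2 : refP r f b a) : a = b :=
  hf (le_antisymm (h1.2 h2.1) (h2.2 h1.1))

lemma refP_strict {r : α → α → Prop} {f : α → ℕ} {a b : α} (h1 : r a b) (h2 : ¬ r b a) :
    refP r f a b ∧ ¬ refP r f b a :=
  ⟨⟨h1, fun h => absurd h h2⟩, fun h => h2 h.1⟩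

/-- A numeric key on a fintype which puts `a` first. -/
noncomputable def favFun [Fintype α] [DecidableEq α] (a : α) : α → ℕ :=
  fun x => if x = a then 0 else (Fintype.equivFin α x : ℕ) + 1

lemma favFun_self [Fintype α] [DecidableEq α] (a : α) : favFun a a = 0 := if_pos rfl

lemma favFun_ne [Fintype α] [DecidableEq α] {a x : α} (h : x ≠ a) : favFun a x ≠ 0 := by
  simp [favFun, h]

lemma favFun_inj [Fintype α] [DecidableEq α] (a : α) : Function.Injective (favFun a) := by
  intro x y h
  unfold favFun at h
  split_ifs at h with h1 h2 h2
  · rw [h1, h2]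
  · simp only [Nat.add_right_cancel_iff] at h
    exact (Fintype.equivFin α).injective (Fin.val_injective h)

/-- Every nonempty finite set totally preordered by `r` has a least element. -/
lemma exists_worst {β : Type*} [DecidableEq β] (r : β → β → Prop) :
    ∀ T : Finset β, T.Nonempty →
    (∀ a ∈ T, ∀ b ∈ T, r a b ∨ r b a) →
    (∀ a ∈ T, ∀ b ∈ T, ∀ c ∈ T, r a b → r b c → r a c) →
    ∃ t ∈ T, ∀ x ∈ T, r x t := by
  intro T
  induction T using Finset.induction_on with
  | empty => intro h; exact absurd h (by simp)
  | insert a T' _ha IH =>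
    intro _ htot htr
    rcases T'.eq_empty_or_nonempty with h | h
    · subst h
      refine ⟨a, Finset.mem_insert_self _ _, fun x hx => ?_⟩
      rcases Finset.mem_insert.1 hx with h' | hx
      · rw [h']
        exact (htot a (Finset.mem_insert_self _ _) a (Finset.mem_insert_self _ _)).elim id id
      · exact absurd hx (by simp)
    · obtain ⟨t, ht, hmin⟩ := IH h
        (fun x hx y hy => htot x (Finset.mem_insert_of_mem hx) y (Finset.mem_insert_of_mem hy))
        (fun x hx y hy z hz => htr x (Finset.mem_insert_of_mem hx) y (Finset.mem_insert_of_mem hy)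
          z (Finset.mem_insert_of_mem hz))
      by_cases hat : r a t
      · refine ⟨t, Finset.mem_insert_of_mem ht, fun x hx => ?_⟩
        rcases Finset.mem_insert.1 hx with h' | hx
        · rw [h']
          exact hat
        · exact hmin x hx
      · have hta : r t a :=
          (htot a (Finset.mem_insert_self _ _) t (Finset.mem_insert_of_mem ht)).resolve_left hat
        refine ⟨a, Finset.mem_insert_self _ _, fun x hx => ?_⟩
        rcases Finset.mem_insert.1 hx with h' | hx
        · rw [h']
          exact (htot a (Finset.mem_insert_self _ _) a (Finset.mem_insert_self _ _)).elim id id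
        · exact htr x (Finset.mem_insert_of_mem hx) t (Finset.mem_insert_of_mem ht) a
            (Finset.mem_insert_self _ _) (hmin x hx) hta

end Aux

namespace SPAST

variable {S P L : Type} [Fintype S] [Fintype P] [Fintype L]
  [DecidableEq S] [DecidableEq P] [DecidableEq L]

lemma mem_projAsg {M : Finset (S × P)} {x : S} {p : P} :
    x ∈ projAsg M p ↔ (x, p) ∈ M := by
  constructor
  · intro h
    obtain ⟨⟨a, b⟩, hab, h2⟩ := Finset.mem_image.1 h
    obtain ⟨hm, hb⟩ := Finset.mem_filter.1 hab
    simp only at h2 hb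
    subst h2; subst hb; exact hm
  · intro h
    exact Finset.mem_image.2 ⟨(x, p), Finset.mem_filter.2 ⟨h, rfl⟩, rfl⟩

lemma mem_lecAsg {I : SPAST S P L} {M : Finset (S × P)} {x : S} {k : L} :
    x ∈ lecAsg I M k ↔ ∃ q, (x, q) ∈ M ∧ I.lec q = k := by
  constructor
  · intro h
    obtain ⟨⟨a, b⟩, hab, h2⟩ := Finset.mem_image.1 h
    obtain ⟨hm, hb⟩ := Finset.mem_filter.1 hab
    simp only at h2 hb
    subst h2; exact ⟨b, hm, hb⟩
  · rintro ⟨q, hq, hk⟩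
    exact Finset.mem_image.2 ⟨(x, q), Finset.mem_filter.2 ⟨hq, hk⟩, rfl⟩

/-- The tie-breaking of `I` which favours project `p` (for every student) and
student `s` (for every lecturer) within ties. -/
noncomputable def breakTies (I : SPAST S P L) (s : S) (p : P) : SPAST S P L where
  lec := I.lec
  c := I.c
  d := I.d
  cpos := I.cpos
  dpos := I.dpos
  acc := I.acc
  sPref := fun s' => refP (I.sPref s') (favFun p)
  lPref := fun k => refP (I.lPref k) (favFun s)
  sRefl := fun s' q hq => refP_refl (I.sRefl s' q hq)
  sTrans := fun s' a ha b hb c hc hab hbc =>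
    refP_trans (I.sTrans s' a ha b hb c hc) (I.sTrans s' c hc a ha b hb)
      (I.sTrans s' b hb c hc a ha) hab hbc
  sTotal := fun s' a ha b hb => refP_total (I.sTotal s' a ha b hb)
  lRefl := fun k t ht => refP_refl (I.lRefl k t ht)
  lTrans := fun k a b c ha hb hc hab hbc =>
    refP_trans (I.lTrans k a b c ha hb hc) (I.lTrans k c a b hc ha hb)
      (I.lTrans k b c a hb hc ha) hab hbc
  lTotal := fun k a b ha hb => refP_total (I.lTotal k a b ha hb)
  capLB := I.capLB
  capUB := I.capUB

lemma breakTies_tb (I : SPAST S P L) (s : S) (p : P) :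
    TieBreaking I (breakTies I s p) :=
  ⟨rfl, rfl, rfl, rfl,
    ⟨fun _ a _ b _ h1 h2 => refP_antisymm (favFun_inj p) h1 h2,
     fun _ t t' _ _ h1 h2 => refP_antisymm (favFun_inj s) h1 h2⟩,
    fun _ _ _ h1 h2 => refP_strict h1 h2,
    fun _ _ _ h1 h2 => refP_strict h1 h2⟩

end SPAST

open SPAST in
theorem super_stable_iff_stable_in_every_tie_breaking {S P L : Type} [Fintype S] [Fintype P] [Fintype L]
    [DecidableEq S] [DecidableEq P] [DecidableEq L]
    (I : SPAST S P L) (M : Finset (S × P)) (hM : I.IsMatching M) :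
    SuperStable I M ↔
      ∀ I' : SPAST S P L, TieBreaking I I' → WeaklyStable I' M := by
  constructor
  · -- super-stable ⇒ weakly stable in every tie-breaking
    rintro ⟨-, hnb⟩ I' tb
    obtain ⟨hlec, hc, hd, hacc, hstrict, hsp, hlp⟩ := tb
    have hlecAsg : ∀ k, lecAsg I' M k = lecAsg I M k := fun k => by
      simp only [lecAsg, hlec]
    constructor
    · obtain ⟨h1, h2, h3, h4⟩ := hM
      refine ⟨fun x hx => by rw [hacc]; exact h1 x hx, h2,
        fun q => by rw [hc]; exact h3 q, fun k => ?_⟩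
      rw [hd]
      simp only [hlec]
      exact h4 k
    · intro s p hw
      apply hnb s p
      obtain ⟨hacc', hnm, hpref, hcap⟩ := hw
      rw [hacc] at hacc'
      refine ⟨hacc', hnm, ?_, ?_⟩
      · intro q hq hcon
        exact (hpref q hq).2 (hsp s q p hcon.1 hcon.2).1
      · simp only [hlec, hc, hd, hlecAsg] at hcap
        set k := I.lec p with hk
        have hsdom : ∃ q ∈ I.acc s, I.lec q = k := ⟨p, hacc', rfl⟩
        rcases hcap with h1 | ⟨h1, h2, h3⟩ | ⟨h1, t, hwt, hst⟩
        · exact Or.inl h1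
        · rcases h3 with hs | ⟨t, hwt, hst⟩
          · exact Or.inr (Or.inl ⟨h1, h2, Or.inl hs⟩)
          · -- translate the I'-worst student into an I-worst one
            have dom : ∀ x ∈ lecAsg I M k, ∃ q ∈ I.acc x, I.lec q = k := by
              intro x hx
              obtain ⟨q, hq, hkq⟩ := mem_lecAsg.1 hx
              exact ⟨q, hM.1 (x, q) hq, hkq⟩
            obtain ⟨t2, ht2, hmin2⟩ := exists_worst (I.lPref k) (lecAsg I M k) ⟨t, hwt.1⟩
              (fun a ha b hb => I.lTotal k a b (dom a ha) (dom b hb))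
              (fun a ha b hb c hc => I.lTrans k a b c (dom a ha) (dom b hb) (dom c hc))
            have hIst : I.lPref k s t := by
              by_contra hcon
              have hts : I.lPref k t s :=
                (I.lTotal k s t hsdom (dom t hwt.1)).resolve_left hcon
              exact (hlp k t s hts hcon).2 hst.1
            have hst2 : I.lPref k s t2 :=
              I.lTrans k s t t2 hsdom (dom t hwt.1) (dom t2 ht2) hIst (hmin2 t hwt.1)
            exact Or.inr (Or.inl ⟨h1, h2, Or.inr ⟨t2, ⟨ht2, hmin2⟩, hst2⟩⟩)
        · have dom : ∀ x ∈ projAsg M p, ∃ q ∈ I.acc x, I.lec q = k := by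
            intro x hx
            exact ⟨p, hM.1 (x, p) (mem_projAsg.1 hx), rfl⟩
          obtain ⟨t2, ht2, hmin2⟩ := exists_worst (I.lPref k) (projAsg M p) ⟨t, hwt.1⟩
            (fun a ha b hb => I.lTotal k a b (dom a ha) (dom b hb))
            (fun a ha b hb c hc => I.lTrans k a b c (dom a ha) (dom b hb) (dom c hc))
          have hIst : I.lPref k s t := by
            by_contra hcon
            have hts : I.lPref k t s :=
              (I.lTotal k s t hsdom (dom t hwt.1)).resolve_left hcon
            exact (hlp k t s hts hcon).2 hst.1
          have hst2 : I.lPref k s t2 :=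
            I.lTrans k s t t2 hsdom (dom t hwt.1) (dom t2 ht2) hIst (hmin2 t hwt.1)
          exact Or.inr (Or.inr ⟨h1, t2, ⟨ht2, hmin2⟩, hst2⟩)
  · -- weakly stable in every tie-breaking ⇒ super-stable
    intro h
    refine ⟨hM, fun s p hsb => ?_⟩
    obtain ⟨haccp, hnm, hpref, hcap⟩ := hsb
    have hw := h (breakTies I s p) (breakTies_tb I s p)
    apply hw.2 s p
    have hprojAsg : ∀ q, projAsg (M := M) q = projAsg M q := fun _ => rfl
    have hlecAsg : ∀ k, lecAsg (breakTies I s p) M k = lecAsg I M k := fun k => rfl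
    refine ⟨haccp, hnm, ?_, ?_⟩
    · -- student strictly prefers p to her current project in the tie-breaking
      intro q hq
      have hqacc : q ∈ I.acc s := hM.1 (s, q) hq
      have hnot := hpref q hq
      have hpq : I.sPref s p q := by
        rcases I.sTotal s p haccp q hqacc with h1 | h1
        · exact h1
        · by_cases h2 : I.sPref s p q
          · exact h2
          · exact absurd ⟨h1, h2⟩ hnot
      have hne : q ≠ p := fun h' => hnm (h' ▸ hq)
      by_cases h2 : I.sPref s q p
      · refine ⟨⟨hpq, fun _ => ?_⟩, fun hcon => ?_⟩
        · show favFun p p ≤ favFun p q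
          rw [favFun_self]
          exact Nat.zero_le _
        · have hle : favFun p q ≤ favFun p p := hcon.2 hpq
          rw [favFun_self] at hle
          exact favFun_ne hne (Nat.le_zero.1 hle)
      · exact refP_strict hpq h2
    · -- the capacity condition
      set k := I.lec p with hk
      have hsdom : ∃ q ∈ I.acc s, I.lec q = k := ⟨p, haccp, rfl⟩
      rcases hcap with h1 | ⟨h1, h2, h3⟩ | ⟨h1, t0, hw0, hst0⟩
      · exact Or.inl h1
      · by_cases hs : s ∈ lecAsg I M k
        · exact Or.inr (Or.inl ⟨h1, h2, Or.inl hs⟩)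
        · rcases h3 with hs' | ⟨t0, hw0, hst0⟩
          · exact absurd hs' hs
          · have dom : ∀ x ∈ lecAsg I M k, ∃ q ∈ I.acc x, I.lec q = k := by
              intro x hx
              obtain ⟨q, hq, hkq⟩ := mem_lecAsg.1 hx
              exact ⟨q, hM.1 (x, q) hq, hkq⟩
            obtain ⟨t', ht', hmin'⟩ := exists_worst (refP (I.lPref k) (favFun s))
              (lecAsg I M k) ⟨t0, hw0.1⟩
              (fun a ha b hb => refP_total (I.lTotal k a b (dom a ha) (dom b hb)))
              (fun a ha b hb c hc => refP_trans (I.lTrans k a b c (dom a ha) (dom b hb) (dom c hc))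
                (I.lTrans k c a b (dom c hc) (dom a ha) (dom b hb))
                (I.lTrans k b c a (dom b hb) (dom c hc) (dom a ha)))
            have h0 : I.lPref k t0 t' := (hmin' t0 hw0.1).1
            have hst' : I.lPref k s t' :=
              I.lTrans k s t0 t' hsdom (dom t0 hw0.1) (dom t' ht') hst0 h0
            have hne : t' ≠ s := fun h' => hs (h' ▸ ht')
            have hstrict : refP (I.lPref k) (favFun s) s t' ∧
                ¬ refP (I.lPref k) (favFun s) t' s := by
              by_cases hts : I.lPref k t' s
              · refine ⟨⟨hst', fun _ => ?_⟩, fun hcon => ?_⟩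
                · rw [favFun_self]
                  exact Nat.zero_le _
                · have hle : favFun s t' ≤ favFun s s := hcon.2 hst'
                  rw [favFun_self] at hle
                  exact favFun_ne hne (Nat.le_zero.1 hle)
              · exact refP_strict hst' hts
            exact Or.inr (Or.inl ⟨h1, h2, Or.inr ⟨t', ⟨ht', hmin'⟩, hstrict⟩⟩)
      · have dom : ∀ x ∈ projAsg M p, ∃ q ∈ I.acc x, I.lec q = k := by
          intro x hx
          exact ⟨p, hM.1 (x, p) (mem_projAsg.1 hx), rfl⟩
        have hsnot : s ∉ projAsg M p := fun h' => hnm (mem_projAsg.1 h')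
        obtain ⟨t', ht', hmin'⟩ := exists_worst (refP (I.lPref k) (favFun s))
          (projAsg M p) ⟨t0, hw0.1⟩
          (fun a ha b hb => refP_total (I.lTotal k a b (dom a ha) (dom b hb)))
          (fun a ha b hb c hc => refP_trans (I.lTrans k a b c (dom a ha) (dom b hb) (dom c hc))
            (I.lTrans k c a b (dom c hc) (dom a ha) (dom b hb))
            (I.lTrans k b c a (dom b hb) (dom c hc) (dom a ha)))
        have h0 : I.lPref k t0 t' := (hmin' t0 hw0.1).1
        have hst' : I.lPref k s t' :=
          I.lTrans k s t0 t' hsdom (dom t0 hw0.1) (dom t' ht') hst0 h0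
        have hne : t' ≠ s := fun h' => hsnot (h' ▸ ht')
        have hstrict : refP (I.lPref k) (favFun s) s t' ∧
            ¬ refP (I.lPref k) (favFun s) t' s := by
          by_cases hts : I.lPref k t' s
          · refine ⟨⟨hst', fun _ => ?_⟩, fun hcon => ?_⟩
            · rw [favFun_self]
              exact Nat.zero_le _
            · have hle : favFun s t' ≤ favFun s s := hcon.2 hst'
              rw [favFun_self] at hle
              exact favFun_ne hne (Nat.le_zero.1 hle)
          · exact refP_strict hst' hts
        exact Or.inr (Or.inr ⟨h1, t', ⟨ht', hmin'⟩, hstrict⟩)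
end

section
/- Let I be an instance of SPA-ST that admits a super-stable matching. Then for any two weakly stable matchings M1 and M2 in I and every lecturer l_k, the number of students assigned to l_k in M1 equals the number of students assigned to l_k in M2. -/
open scoped Classical

namespace SPAST

variable {S P L : Type} [Fintype S] [Fintype P] [Fintype L]
  [DecidableEq S] [DecidableEq P] [DecidableEq L]

/-! ### Auxiliary development for the main theorem -/

section RHTPrelim

variable {S P L : Type} [Fintype S] [Fintype P] [Fintype L]
  [DecidableEq S] [DecidableEq P] [DecidableEq L]

/-- strict lecturer preference -/
def lSt (I : SPAST S P L) (k : L) (t u : S) : Prop := I.lPref k t u ∧ ¬ I.lPref k u t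

/-- `t` is an admissible student for lecturer `k` -/
def okL (I : SPAST S P L) (k : L) (t : S) : Prop := ∃ p ∈ I.acc t, I.lec p = k

variable {I : SPAST S P L}

lemma mem_projAsg_iff {N : Finset (S × P)} {p : P} {s : S} :
    s ∈ projAsg N p ↔ (s, p) ∈ N := by
  unfold projAsg
  simp only [Finset.mem_image, Finset.mem_filter]
  constructor
  · rintro ⟨⟨s', p'⟩, ⟨hmem, hp⟩, rfl⟩
    simp only at hp
    subst hp; exact hmem
  · intro h; exact ⟨(s, p), ⟨h, rfl⟩, rfl⟩

lemma mem_lecAsg_iff {N : Finset (S × P)} {k : L} {s : S} :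
    s ∈ lecAsg I N k ↔ ∃ p, (s, p) ∈ N ∧ I.lec p = k := by
  unfold lecAsg
  simp only [Finset.mem_image, Finset.mem_filter]
  constructor
  · rintro ⟨⟨s', p'⟩, ⟨hmem, hp⟩, rfl⟩
    exact ⟨p', hmem, hp⟩
  · rintro ⟨p, h1, h2⟩; exact ⟨(s, p), ⟨h1, h2⟩, rfl⟩

lemma projAsg_card (N : Finset (S × P)) (p : P) :
    (projAsg N p).card = (N.filter (fun x => x.2 = p)).card := by
  apply Finset.card_image_of_injOn
  intro x hx y hy hxy
  simp only [Finset.coe_filter, Set.mem_setOf_eq] at hx hy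
  exact Prod.ext hxy (hx.2.trans hy.2.symm)

lemma lecAsg_card {N : Finset (S × P)}
    (hU : ∀ s : S, ∀ p q : P, (s, p) ∈ N → (s, q) ∈ N → p = q) (k : L) :
    (lecAsg I N k).card = (N.filter (fun x => I.lec x.2 = k)).card := by
  apply Finset.card_image_of_injOn
  intro x hx y hy hxy
  simp only [Finset.coe_filter, Set.mem_setOf_eq] at hx hy
  have hx' : (x.1, x.2) ∈ N := by simpa using hx.1
  have hy' : (x.1, y.2) ∈ N := by rw [hxy]; simpa using hy.1
  exact Prod.ext hxy (hU x.1 x.2 y.2 hx' hy')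

lemma projAsg_card_le (hN : I.IsMatching N) (p : P) :
    (projAsg N p).card ≤ I.c p := by
  rw [projAsg_card]; exact hN.2.2.1 p

lemma lecAsg_card_le (hN : I.IsMatching N) (k : L) :
    (lecAsg I N k).card ≤ I.d k := by
  rw [lecAsg_card hN.2.1]; exact hN.2.2.2 k

lemma exists_worst (k : L) :
    ∀ T : Finset S, T.Nonempty → (∀ t ∈ T, okL I k t) → ∃ w, I.WorstIn k T w := by
  intro T
  induction T using Finset.induction_on with
  | empty => intro h _; simp at h
  | @insert a T' ha ih =>
    intro _ hok
    by_cases hT' : T'.Nonempty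
    · obtain ⟨w, hwT, hwmin⟩ := ih hT' (fun t ht => hok t (Finset.mem_insert_of_mem ht))
      have oka : okL I k a := hok a (Finset.mem_insert_self _ _)
      have okw : okL I k w := hok w (Finset.mem_insert_of_mem hwT)
      by_cases h : I.lPref k a w
      · refine ⟨w, Finset.mem_insert_of_mem hwT, ?_⟩
        intro t ht
        rcases Finset.mem_insert.mp ht with rfl | ht'
        · exact h
        · exact hwmin t ht'
      · have haw : I.lPref k w a := (I.lTotal k a w oka okw).resolve_left h
        refine ⟨a, Finset.mem_insert_self _ _, ?_⟩
        intro t ht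
        rcases Finset.mem_insert.mp ht with rfl | ht'
        · exact I.lRefl k t oka
        · exact I.lTrans k t w a (hok t (Finset.mem_insert_of_mem ht')) okw oka
            (hwmin t ht') haw
    · have hT'e : T' = ∅ := Finset.not_nonempty_iff_eq_empty.mp hT'
      subst hT'e
      refine ⟨a, Finset.mem_insert_self _ _, ?_⟩
      intro t ht
      rcases Finset.mem_insert.mp ht with rfl | ht'
      · exact I.lRefl k t (hok t (Finset.mem_insert_self _ _))
      · simp at ht'

lemma lSt_of_not_pref {k : L} {t u : S} (hot : okL I k t) (hou : okL I k u)
    (h : ¬ I.lPref k u t) : lSt I k t u :=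
  ⟨(I.lTotal k t u hot hou).resolve_right h, h⟩

lemma lpref_lSt_trans {k : L} {a b c : S} (ha : okL I k a) (hb : okL I k b) (hc : okL I k c)
    (h1 : I.lPref k a b) (h2 : lSt I k b c) : lSt I k a c :=
  ⟨I.lTrans k a b c ha hb hc h1 h2.1,
   fun hca => h2.2 (I.lTrans k c a b hc ha hb hca h1)⟩

lemma lSt_lpref_trans {k : L} {a b c : S} (ha : okL I k a) (hb : okL I k b) (hc : okL I k c)
    (h1 : lSt I k a b) (h2 : I.lPref k b c) : lSt I k a c :=
  ⟨I.lTrans k a b c ha hb hc h1.1 h2,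
   fun hca => h1.2 (I.lTrans k b c a hb hc ha h2 hca)⟩

lemma okL_of_lecAsg {N : Finset (S × P)} (hN : I.IsMatching N) {k : L} {t : S}
    (h : t ∈ lecAsg I N k) : okL I k t := by
  obtain ⟨p, hp, hl⟩ := mem_lecAsg_iff.mp h
  exact ⟨p, hN.1 (t, p) hp, hl⟩

lemma okL_of_projAsg {N : Finset (S × P)} (hN : I.IsMatching N) {p : P} {t : S}
    (h : t ∈ projAsg N p) : okL I (I.lec p) t :=
  ⟨p, hN.1 (t, p) (mem_projAsg_iff.mp h), rfl⟩

end RHTPrelim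

section RHTUnpack

set_option linter.unusedSectionVars false

variable {S P L : Type} [Fintype S] [Fintype P] [Fintype L]
  [DecidableEq S] [DecidableEq P] [DecidableEq L]
variable {I : SPAST S P L} {M W : Finset (S × P)}

/-- Unpacking non-super-blocking for the super-stable matching `M`. -/
lemma super_unpack (hM : I.SuperStable M) {s : S} {p : P}
    (hacc : p ∈ I.acc s) (hnm : (s, p) ∉ M)
    (hI1 : ∀ q, (s, q) ∈ M → ¬(I.sPref s q p ∧ ¬ I.sPref s p q))
    (hoks : okL I (I.lec p) s) :
    ((projAsg M p).card = I.c p ∧ ∀ t ∈ projAsg M p, lSt I (I.lec p) t s) ∨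
    ((projAsg M p).card < I.c p ∧ (lecAsg I M (I.lec p)).card = I.d (I.lec p) ∧
      s ∉ lecAsg I M (I.lec p) ∧ ∀ t ∈ lecAsg I M (I.lec p), lSt I (I.lec p) t s) := by
  have h4 : ¬ (((projAsg M p).card < I.c p ∧ (lecAsg I M (I.lec p)).card < I.d (I.lec p)) ∨
      ((projAsg M p).card < I.c p ∧ (lecAsg I M (I.lec p)).card = I.d (I.lec p) ∧
        (s ∈ lecAsg I M (I.lec p) ∨
        ∃ t : S, I.WorstIn (I.lec p) (lecAsg I M (I.lec p)) t ∧ I.lPref (I.lec p) s t)) ∨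
      ((projAsg M p).card = I.c p ∧
        ∃ t : S, I.WorstIn (I.lec p) (projAsg M p) t ∧ I.lPref (I.lec p) s t)) :=
    fun hd => hM.2 s p ⟨hacc, hnm, hI1, hd⟩
  push_neg at h4
  obtain ⟨hA, hB, hC⟩ := h4
  rcases eq_or_lt_of_le (projAsg_card_le hM.1 p) with hfull | hlt
  · left
    refine ⟨hfull, ?_⟩
    have hne : (projAsg M p).Nonempty := Finset.card_pos.mp (by rw [hfull]; exact I.cpos p)
    have hokT : ∀ t ∈ projAsg M p, okL I (I.lec p) t := fun t ht => okL_of_projAsg hM.1 ht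
    obtain ⟨w, hw⟩ := exists_worst (I.lec p) _ hne hokT
    have hsw : ¬ I.lPref (I.lec p) s w := hC hfull w hw
    have hws : lSt I (I.lec p) w s := lSt_of_not_pref (hokT w hw.1) hoks hsw
    intro t ht
    exact lpref_lSt_trans (hokT t ht) (hokT w hw.1) hoks (hw.2 t ht) hws
  · right
    have hlfull : (lecAsg I M (I.lec p)).card = I.d (I.lec p) :=
      le_antisymm (lecAsg_card_le hM.1 (I.lec p)) (hA hlt)
    obtain ⟨hsnot, hBw⟩ := hB hlt hlfull
    have hne : (lecAsg I M (I.lec p)).Nonempty :=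
      Finset.card_pos.mp (by rw [hlfull]; exact I.dpos _)
    have hokT : ∀ t ∈ lecAsg I M (I.lec p), okL I (I.lec p) t :=
      fun t ht => okL_of_lecAsg hM.1 ht
    obtain ⟨w, hw⟩ := exists_worst (I.lec p) _ hne hokT
    have hws : lSt I (I.lec p) w s := lSt_of_not_pref (hokT w hw.1) hoks (hBw w hw)
    exact ⟨hlt, hlfull, hsnot, fun t ht =>
      lpref_lSt_trans (hokT t ht) (hokT w hw.1) hoks (hw.2 t ht) hws⟩

/-- Unpacking non-weak-blocking for the weakly stable matching `W`,
for a pair where the student strictly prefers `q` to everything in `W`. -/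
lemma weak_unpack (hW : I.WeaklyStable W) {t : S} {q : P}
    (hacc : q ∈ I.acc t) (hnw : (t, q) ∉ W)
    (ha : ∀ r, (t, r) ∈ W → (I.sPref t q r ∧ ¬ I.sPref t r q))
    (hokt : okL I (I.lec q) t) :
    ((projAsg W q).card = I.c q ∧ ∀ u ∈ projAsg W q, I.lPref (I.lec q) u t) ∨
    ((projAsg W q).card < I.c q ∧ (lecAsg I W (I.lec q)).card = I.d (I.lec q) ∧
      t ∉ lecAsg I W (I.lec q) ∧ ∀ u ∈ lecAsg I W (I.lec q), I.lPref (I.lec q) u t) := by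
  have h4 : ¬ (((projAsg W q).card < I.c q ∧ (lecAsg I W (I.lec q)).card < I.d (I.lec q)) ∨
      ((projAsg W q).card < I.c q ∧ (lecAsg I W (I.lec q)).card = I.d (I.lec q) ∧
        (t ∈ lecAsg I W (I.lec q) ∨
        ∃ u : S, I.WorstIn (I.lec q) (lecAsg I W (I.lec q)) u ∧
          (I.lPref (I.lec q) t u ∧ ¬I.lPref (I.lec q) u t))) ∨
      ((projAsg W q).card = I.c q ∧
        ∃ u : S, I.WorstIn (I.lec q) (projAsg W q) u ∧
          (I.lPref (I.lec q) t u ∧ ¬I.lPref (I.lec q) u t))) :=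
    fun hd => hW.2 t q ⟨hacc, hnw, ha, hd⟩
  push_neg at h4
  obtain ⟨hA, hB, hC⟩ := h4
  have hnotstrict : ∀ w : S, okL I (I.lec q) w →
      (I.lPref (I.lec q) t w → I.lPref (I.lec q) w t) → I.lPref (I.lec q) w t := by
    intro w hokw himp
    by_cases hwt : I.lPref (I.lec q) w t
    · exact hwt
    · exact himp ((I.lTotal _ t w hokt hokw).resolve_right hwt)
  rcases eq_or_lt_of_le (projAsg_card_le hW.1 q) with hfull | hlt
  · left
    refine ⟨hfull, ?_⟩
    have hne : (projAsg W q).Nonempty := Finset.card_pos.mp (by rw [hfull]; exact I.cpos q)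
    have hokT : ∀ u ∈ projAsg W q, okL I (I.lec q) u := fun u hu => okL_of_projAsg hW.1 hu
    obtain ⟨w, hw⟩ := exists_worst (I.lec q) _ hne hokT
    have hwt : I.lPref (I.lec q) w t := hnotstrict w (hokT w hw.1) (hC hfull w hw)
    intro u hu
    exact I.lTrans _ u w t (hokT u hu) (hokT w hw.1) hokt (hw.2 u hu) hwt
  · right
    have hlfull : (lecAsg I W (I.lec q)).card = I.d (I.lec q) :=
      le_antisymm (lecAsg_card_le hW.1 (I.lec q)) (hA hlt)
    obtain ⟨htnot, hBw⟩ := hB hlt hlfull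
    have hne : (lecAsg I W (I.lec q)).Nonempty :=
      Finset.card_pos.mp (by rw [hlfull]; exact I.dpos _)
    have hokT : ∀ u ∈ lecAsg I W (I.lec q), okL I (I.lec q) u :=
      fun u hu => okL_of_lecAsg hW.1 hu
    obtain ⟨w, hw⟩ := exists_worst (I.lec q) _ hne hokT
    have hwt : I.lPref (I.lec q) w t := hnotstrict w (hokT w hw.1) (hBw w hw)
    exact ⟨hlt, hlfull, htnot, fun u hu =>
      I.lTrans _ u w t (hokT u hu) (hokT w hw.1) hokt (hw.2 u hu) hwt⟩

end RHTUnpack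

section RHTPairing

set_option linter.unusedSectionVars false

variable {S P L : Type} [Fintype S] [Fintype P] [Fintype L]
  [DecidableEq S] [DecidableEq P] [DecidableEq L]

lemma exists_pairing_aux (A B : Finset S) (h : A.card ≤ B.card) :
    ∃ R : Finset (S × S),
      (∀ z ∈ R, z.1 ∈ A ∧ z.2 ∈ B) ∧
      (∀ z ∈ R, ∀ z' ∈ R, z.1 = z'.1 → z = z') ∧
      (∀ z ∈ R, ∀ z' ∈ R, z.2 = z'.2 → z = z') ∧
      (∀ a ∈ A, ∃ b, (a, b) ∈ R) ∧
      (B.card ≤ A.card → ∀ b ∈ B, ∃ a, (a, b) ∈ R) := by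
  classical
  let f : {x : S // x ∈ A} → {x : S // x ∈ B} :=
    fun a => B.equivFin.symm (Fin.castLE h (A.equivFin a))
  have hf : Function.Injective f := by
    intro a b hab
    have h2 : Fin.castLE h (A.equivFin a) = Fin.castLE h (A.equivFin b) :=
      B.equivFin.symm.injective hab
    have h3 : (A.equivFin a : ℕ) = (A.equivFin b : ℕ) := by
      have := congrArg Fin.val h2
      simpa using this
    exact A.equivFin.injective (Fin.ext h3)
  refine ⟨A.attach.image (fun (a : {x : S // x ∈ A}) => ((a.1, (f a).1) : S × S)),
    ?_, ?_, ?_, ?_, ?_⟩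
  · intro z hz
    obtain ⟨a, _, rfl⟩ := Finset.mem_image.mp hz
    exact ⟨a.2, (f a).2⟩
  · intro z hz z' hz' h1
    obtain ⟨a, _, rfl⟩ := Finset.mem_image.mp hz
    obtain ⟨a', _, rfl⟩ := Finset.mem_image.mp hz'
    have : a = a' := Subtype.ext h1
    rw [this]
  · intro z hz z' hz' h2
    obtain ⟨a, _, rfl⟩ := Finset.mem_image.mp hz
    obtain ⟨a', _, rfl⟩ := Finset.mem_image.mp hz'
    have : a = a' := hf (Subtype.ext h2)
    rw [this]
  · intro a ha
    exact ⟨(f ⟨a, ha⟩).1, Finset.mem_image.mpr ⟨⟨a, ha⟩, Finset.mem_attach _ _, rfl⟩⟩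
  · intro hBA b hb
    have hcards : A.card = B.card := le_antisymm h hBA
    have hinj : Function.Injective (fun a : {x : S // x ∈ A} => (f a).1) :=
      fun a a' haa => hf (Subtype.ext haa)
    have hsub : A.attach.image (fun a => (f a).1) ⊆ B := by
      intro x hx
      obtain ⟨a, _, rfl⟩ := Finset.mem_image.mp hx
      exact (f a).2
    have hcard2 : (A.attach.image (fun a => (f a).1)).card = B.card := by
      rw [Finset.card_image_of_injective _ hinj, Finset.card_attach, hcards]
    have heq : A.attach.image (fun a => (f a).1) = B :=
      Finset.eq_of_subset_of_card_le hsub (le_of_eq hcard2.symm)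
    have hbmem : b ∈ A.attach.image (fun a => (f a).1) := by rw [heq]; exact hb
    obtain ⟨a, _, hab⟩ := Finset.mem_image.mp hbmem
    exact ⟨a.1, Finset.mem_image.mpr ⟨a, Finset.mem_attach _ _, by rw [hab]⟩⟩

lemma exists_pairing (A B : Finset S) :
    ∃ R : Finset (S × S),
      (∀ z ∈ R, z.1 ∈ A ∧ z.2 ∈ B) ∧
      (∀ z ∈ R, ∀ z' ∈ R, z.1 = z'.1 → z = z') ∧
      (∀ z ∈ R, ∀ z' ∈ R, z.2 = z'.2 → z = z') ∧
      (A.card ≤ B.card → ∀ a ∈ A, ∃ b, (a, b) ∈ R) ∧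
      (B.card ≤ A.card → ∀ b ∈ B, ∃ a, (a, b) ∈ R) := by
  classical
  by_cases h : A.card ≤ B.card
  · obtain ⟨R, h1, h2, h3, h4, h5⟩ := exists_pairing_aux A B h
    exact ⟨R, h1, h2, h3, fun _ => h4, h5⟩
  · have h' : B.card ≤ A.card := le_of_not_ge h
    obtain ⟨R, h1, h2, h3, h4, h5⟩ := exists_pairing_aux B A h'
    refine ⟨R.image Prod.swap, ?_, ?_, ?_, ?_, ?_⟩
    · intro z hz
      obtain ⟨w, hw, rfl⟩ := Finset.mem_image.mp hz
      exact ⟨(h1 w hw).2, (h1 w hw).1⟩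
    · intro z hz z' hz' he
      obtain ⟨w, hw, rfl⟩ := Finset.mem_image.mp hz
      obtain ⟨w', hw', rfl⟩ := Finset.mem_image.mp hz'
      rw [h3 w hw w' hw' he]
    · intro z hz z' hz' he
      obtain ⟨w, hw, rfl⟩ := Finset.mem_image.mp hz
      obtain ⟨w', hw', rfl⟩ := Finset.mem_image.mp hz'
      rw [h2 w hw w' hw' he]
    · intro hAB a ha
      obtain ⟨b, hb⟩ := h5 hAB a ha
      exact ⟨b, Finset.mem_image.mpr ⟨(b, a), hb, rfl⟩⟩
    · intro _ b hb
      obtain ⟨a, hab⟩ := h4 b hb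
      exact ⟨a, Finset.mem_image.mpr ⟨(b, a), hab, rfl⟩⟩

end RHTPairing

section RHTDiff

set_option linter.unusedSectionVars false

variable {S P L : Type} [Fintype S] [Fintype P] [Fintype L]
  [DecidableEq S] [DecidableEq P] [DecidableEq L]

/-- Students matched to `p` in `W` but not in `M`. -/
def AprW (W M : Finset (S × P)) (p : P) : Finset S := projAsg W p \ projAsg M p

/-- Students matched to lecturer `k` in `W` whose `W`-pair is not in `M`. -/
def AlecW (I : SPAST S P L) (W M : Finset (S × P)) (k : L) : Finset S :=
  Finset.univ.filter (fun s => ∃ p, I.lec p = k ∧ s ∈ AprW W M p)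

/-- Students with a common pair at lecturer `k`. -/
def ClecW (I : SPAST S P L) (W M : Finset (S × P)) (k : L) : Finset S :=
  Finset.univ.filter (fun s => ∃ p, I.lec p = k ∧ (s, p) ∈ W ∧ (s, p) ∈ M)

variable {I : SPAST S P L} {W M : Finset (S × P)}

lemma mem_AprW {p : P} {s : S} : s ∈ AprW W M p ↔ (s, p) ∈ W ∧ (s, p) ∉ M := by
  unfold AprW
  rw [Finset.mem_sdiff, mem_projAsg_iff, mem_projAsg_iff]

lemma mem_AlecW {k : L} {s : S} :
    s ∈ AlecW I W M k ↔ ∃ p, I.lec p = k ∧ (s, p) ∈ W ∧ (s, p) ∉ M := by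
  unfold AlecW
  simp only [Finset.mem_filter, Finset.mem_univ, true_and, mem_AprW]

lemma mem_ClecW {k : L} {s : S} :
    s ∈ ClecW I W M k ↔ ∃ p, I.lec p = k ∧ (s, p) ∈ W ∧ (s, p) ∈ M := by
  unfold ClecW
  simp only [Finset.mem_filter, Finset.mem_univ, true_and]

lemma ClecW_comm (k : L) : ClecW I W M k = ClecW I M W k := by
  ext s
  rw [mem_ClecW, mem_ClecW]
  constructor <;> (rintro ⟨p, h1, h2, h3⟩; exact ⟨p, h1, h3, h2⟩)

lemma AprW_proj_unique (hUW : ∀ s : S, ∀ p q : P, (s, p) ∈ W → (s, q) ∈ W → p = q)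
    {p p' : P} {s : S} (h : s ∈ AprW W M p) (h' : s ∈ AprW W M p') : p = p' :=
  hUW s p p' (mem_AprW.mp h).1 (mem_AprW.mp h').1

lemma AlecW_lec_unique (hUW : ∀ s : S, ∀ p q : P, (s, p) ∈ W → (s, q) ∈ W → p = q)
    {k k' : L} {s : S} (h : s ∈ AlecW I W M k) (h' : s ∈ AlecW I W M k') : k = k' := by
  obtain ⟨p, hp, h1, _⟩ := mem_AlecW.mp h
  obtain ⟨p', hp', h1', _⟩ := mem_AlecW.mp h'
  rw [← hp, ← hp', hUW s p p' h1 h1']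

lemma lec_split (hUW : ∀ s : S, ∀ p q : P, (s, p) ∈ W → (s, q) ∈ W → p = q) (k : L) :
    (lecAsg I W k).card = (AlecW I W M k).card + (ClecW I W M k).card := by
  have hunion : lecAsg I W k = AlecW I W M k ∪ ClecW I W M k := by
    ext s
    rw [mem_lecAsg_iff, Finset.mem_union, mem_AlecW, mem_ClecW]
    constructor
    · rintro ⟨p, hw, hl⟩
      by_cases hm : (s, p) ∈ M
      · exact Or.inr ⟨p, hl, hw, hm⟩
      · exact Or.inl ⟨p, hl, hw, hm⟩
    · rintro (⟨p, hl, hw, _⟩ | ⟨p, hl, hw, _⟩) <;> exact ⟨p, hw, hl⟩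
  have hdisj : Disjoint (AlecW I W M k) (ClecW I W M k) := by
    rw [Finset.disjoint_left]
    intro s h1 h2
    obtain ⟨p, _, hw, hnm⟩ := mem_AlecW.mp h1
    obtain ⟨p', _, hw', hm⟩ := mem_ClecW.mp h2
    rw [hUW s p p' hw hw'] at hnm
    exact hnm hm
  rw [hunion, Finset.card_union_of_disjoint hdisj]

lemma AlecW_card_le (hUW : ∀ s : S, ∀ p q : P, (s, p) ∈ W → (s, q) ∈ W → p = q)
    (hUM : ∀ s : S, ∀ p q : P, (s, p) ∈ M → (s, q) ∈ M → p = q)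
    {k : L} (h : (lecAsg I W k).card ≤ (lecAsg I M k).card) :
    (AlecW I W M k).card ≤ (AlecW I M W k).card := by
  have e1 := lec_split (I := I) (W := W) (M := M) hUW k
  have e2 := lec_split (I := I) (W := M) (M := W) hUM k
  rw [ClecW_comm] at e2
  omega

lemma AprW_card_le {p : P} (h : (projAsg W p).card ≤ (projAsg M p).card) :
    (AprW W M p).card ≤ (AprW M W p).card := by
  have e1 := Finset.card_sdiff_add_card_inter (projAsg W p) (projAsg M p)
  have e2 := Finset.card_sdiff_add_card_inter (projAsg M p) (projAsg W p)
  rw [Finset.inter_comm] at e2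
  unfold AprW
  omega

end RHTDiff

section RHTExistsR

set_option linter.unusedSectionVars false

variable {S P L : Type} [Fintype S] [Fintype P] [Fintype L]
  [DecidableEq S] [DecidableEq P] [DecidableEq L]

lemma exists_R (I : SPAST S P L) (W M : Finset (S × P))
    (hUW : ∀ s : S, ∀ p q : P, (s, p) ∈ W → (s, q) ∈ W → p = q)
    (hUM : ∀ s : S, ∀ p q : P, (s, p) ∈ M → (s, q) ∈ M → p = q) :
    ∃ R : Finset (S × S),
      (∀ z ∈ R, ∃ p q, I.lec p = I.lec q ∧ z.1 ∈ AprW W M p ∧ z.2 ∈ AprW M W q) ∧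
      (∀ z ∈ R, ∀ z' ∈ R, z.1 = z'.1 → z = z') ∧
      (∀ z ∈ R, ∀ z' ∈ R, z.2 = z'.2 → z = z') ∧
      (∀ p, (AprW W M p).card ≤ (AprW M W p).card →
        ∀ s ∈ AprW W M p, ∃ t, t ∈ AprW M W p ∧ (s, t) ∈ R) ∧
      (∀ p, (AprW M W p).card ≤ (AprW W M p).card →
        ∀ t ∈ AprW M W p, ∃ s, s ∈ AprW W M p ∧ (s, t) ∈ R) ∧
      (∀ k, (AlecW I W M k).card ≤ (AlecW I M W k).card →
        ∀ s ∈ AlecW I W M k, ∃ t, (s, t) ∈ R) ∧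
      (∀ k, (AlecW I M W k).card ≤ (AlecW I W M k).card →
        ∀ t ∈ AlecW I M W k, ∃ s, (s, t) ∈ R) := by
  classical
  choose Rp hmemp hlup hrup hltp hrtp using
    fun p : P => exists_pairing (AprW W M p) (AprW M W p)
  set R1 : Finset (S × S) := Finset.univ.biUnion Rp with hR1def
  have hR1mem : ∀ z ∈ R1, ∃ p, z ∈ Rp p := by
    intro z hz
    obtain ⟨p, _, hp⟩ := Finset.mem_biUnion.mp hz
    exact ⟨p, hp⟩
  have hR1intro : ∀ p, ∀ z ∈ Rp p, z ∈ R1 :=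
    fun p z hz => Finset.mem_biUnion.mpr ⟨p, Finset.mem_univ p, hz⟩
  have hR1lu : ∀ z ∈ R1, ∀ z' ∈ R1, z.1 = z'.1 → z = z' := by
    intro z hz z' hz' he
    obtain ⟨p, hp⟩ := hR1mem z hz
    obtain ⟨p', hp'⟩ := hR1mem z' hz'
    have h1 := (hmemp p z hp).1
    rw [he] at h1
    have : p = p' := AprW_proj_unique hUW h1 (hmemp p' z' hp').1
    subst this
    exact hlup p z hp z' hp' he
  have hR1ru : ∀ z ∈ R1, ∀ z' ∈ R1, z.2 = z'.2 → z = z' := by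
    intro z hz z' hz' he
    obtain ⟨p, hp⟩ := hR1mem z hz
    obtain ⟨p', hp'⟩ := hR1mem z' hz'
    have h1 := (hmemp p z hp).2
    rw [he] at h1
    have : p = p' := AprW_proj_unique hUM h1 (hmemp p' z' hp').2
    subst this
    exact hrup p z hp z' hp' he
  set ls : Finset S := R1.image Prod.fst with hlsdef
  set rs : Finset S := R1.image Prod.snd with hrsdef
  choose Rk hmemk hluk hruk hltk hrtk using
    fun k : L => exists_pairing ((AlecW I W M k) \ ls) ((AlecW I M W k) \ rs)
  set R2 : Finset (S × S) := Finset.univ.biUnion Rk with hR2def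
  have hR2mem : ∀ z ∈ R2, ∃ k, z ∈ Rk k := by
    intro z hz
    obtain ⟨k, _, hk⟩ := Finset.mem_biUnion.mp hz
    exact ⟨k, hk⟩
  -- the filter card bridge
  have hcap : ∀ k : L, (AlecW I W M k ∩ ls).card = (AlecW I M W k ∩ rs).card := by
    intro k
    have cA : (R1.filter (fun z => z.1 ∈ AlecW I W M k)).card = (AlecW I W M k ∩ ls).card := by
      apply Finset.card_bij (fun z _ => z.1)
      · intro z hz
        obtain ⟨hz1, hz2⟩ := Finset.mem_filter.mp hz
        exact Finset.mem_inter.mpr ⟨hz2, Finset.mem_image.mpr ⟨z, hz1, rfl⟩⟩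
      · intro z hz z' hz' he
        exact hR1lu z (Finset.mem_filter.mp hz).1 z' (Finset.mem_filter.mp hz').1 he
      · intro b hb
        obtain ⟨hb1, hb2⟩ := Finset.mem_inter.mp hb
        obtain ⟨z, hz, hz1⟩ := Finset.mem_image.mp hb2
        refine ⟨z, Finset.mem_filter.mpr ⟨hz, ?_⟩, hz1⟩
        rw [hz1]; exact hb1
    have cB : (R1.filter (fun z => z.2 ∈ AlecW I M W k)).card = (AlecW I M W k ∩ rs).card := by
      apply Finset.card_bij (fun z _ => z.2)
      · intro z hz
        obtain ⟨hz1, hz2⟩ := Finset.mem_filter.mp hz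
        exact Finset.mem_inter.mpr ⟨hz2, Finset.mem_image.mpr ⟨z, hz1, rfl⟩⟩
      · intro z hz z' hz' he
        exact hR1ru z (Finset.mem_filter.mp hz).1 z' (Finset.mem_filter.mp hz').1 he
      · intro b hb
        obtain ⟨hb1, hb2⟩ := Finset.mem_inter.mp hb
        obtain ⟨z, hz, hz1⟩ := Finset.mem_image.mp hb2
        refine ⟨z, Finset.mem_filter.mpr ⟨hz, ?_⟩, hz1⟩
        rw [hz1]; exact hb1
    have heqf : R1.filter (fun z => z.1 ∈ AlecW I W M k)
        = R1.filter (fun z => z.2 ∈ AlecW I M W k) := by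
      apply Finset.filter_congr
      intro z hz
      obtain ⟨p, hp⟩ := hR1mem z hz
      have hz1 := (hmemp p z hp).1
      have hz2 := (hmemp p z hp).2
      constructor
      · intro h
        obtain ⟨p₂, hlp₂, hw₂, _⟩ := mem_AlecW.mp h
        have : p₂ = p := hUW z.1 p₂ p hw₂ (mem_AprW.mp hz1).1
        subst this
        exact mem_AlecW.mpr ⟨p₂, hlp₂, (mem_AprW.mp hz2).1, (mem_AprW.mp hz2).2⟩
      · intro h
        obtain ⟨q₂, hlq₂, hm₂, _⟩ := mem_AlecW.mp h
        have : q₂ = p := hUM z.2 q₂ p hm₂ (mem_AprW.mp hz2).1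
        subst this
        exact mem_AlecW.mpr ⟨q₂, hlq₂, (mem_AprW.mp hz1).1, (mem_AprW.mp hz1).2⟩
    rw [← cA, ← cB, heqf]
  refine ⟨R1 ∪ R2, ?_, ?_, ?_, ?_, ?_, ?_, ?_⟩
  · -- structure
    intro z hz
    rcases Finset.mem_union.mp hz with hz | hz
    · obtain ⟨p, hp⟩ := hR1mem z hz
      exact ⟨p, p, rfl, (hmemp p z hp).1, (hmemp p z hp).2⟩
    · obtain ⟨k, hk⟩ := hR2mem z hz
      have h1 := Finset.mem_sdiff.mp (hmemk k z hk).1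
      have h2 := Finset.mem_sdiff.mp (hmemk k z hk).2
      obtain ⟨p, hlp, hw, hnm⟩ := mem_AlecW.mp h1.1
      obtain ⟨q, hlq, hm, hnw⟩ := mem_AlecW.mp h2.1
      exact ⟨p, q, by rw [hlp, hlq], mem_AprW.mpr ⟨hw, hnm⟩, mem_AprW.mpr ⟨hm, hnw⟩⟩
  · -- left uniqueness
    intro z hz z' hz' he
    rcases Finset.mem_union.mp hz with hz1 | hz1 <;> rcases Finset.mem_union.mp hz' with hz2 | hz2
    · exact hR1lu z hz1 z' hz2 he
    · exfalso
      obtain ⟨k, hk⟩ := hR2mem z' hz2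
      have h := Finset.mem_sdiff.mp (hmemk k z' hk).1
      rw [← he] at h
      exact h.2 (Finset.mem_image.mpr ⟨z, hz1, rfl⟩)
    · exfalso
      obtain ⟨k, hk⟩ := hR2mem z hz1
      have h := Finset.mem_sdiff.mp (hmemk k z hk).1
      rw [he] at h
      exact h.2 (Finset.mem_image.mpr ⟨z', hz2, rfl⟩)
    · obtain ⟨k, hk⟩ := hR2mem z hz1
      obtain ⟨k', hk'⟩ := hR2mem z' hz2
      have h1 := (Finset.mem_sdiff.mp (hmemk k z hk).1).1
      rw [he] at h1
      have : k = k' := AlecW_lec_unique hUW h1 (Finset.mem_sdiff.mp (hmemk k' z' hk').1).1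
      subst this
      exact hluk k z hk z' hk' he
  · -- right uniqueness
    intro z hz z' hz' he
    rcases Finset.mem_union.mp hz with hz1 | hz1 <;> rcases Finset.mem_union.mp hz' with hz2 | hz2
    · exact hR1ru z hz1 z' hz2 he
    · exfalso
      obtain ⟨k, hk⟩ := hR2mem z' hz2
      have h := Finset.mem_sdiff.mp (hmemk k z' hk).2
      rw [← he] at h
      exact h.2 (Finset.mem_image.mpr ⟨z, hz1, rfl⟩)
    · exfalso
      obtain ⟨k, hk⟩ := hR2mem z hz1
      have h := Finset.mem_sdiff.mp (hmemk k z hk).2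
      rw [he] at h
      exact h.2 (Finset.mem_image.mpr ⟨z', hz2, rfl⟩)
    · obtain ⟨k, hk⟩ := hR2mem z hz1
      obtain ⟨k', hk'⟩ := hR2mem z' hz2
      have h1 := (Finset.mem_sdiff.mp (hmemk k z hk).2).1
      rw [he] at h1
      have : k = k' := AlecW_lec_unique hUM h1 (Finset.mem_sdiff.mp (hmemk k' z' hk').2).1
      subst this
      exact hruk k z hk z' hk' he
  · -- project-level left totality
    intro p hcard s hs
    obtain ⟨b, hb⟩ := hltp p hcard s hs
    exact ⟨b, (hmemp p _ hb).2, Finset.mem_union_left _ (hR1intro p _ hb)⟩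
  · -- project-level right totality
    intro p hcard t ht
    obtain ⟨a, ha⟩ := hrtp p hcard t ht
    exact ⟨a, (hmemp p _ ha).1, Finset.mem_union_left _ (hR1intro p _ ha)⟩
  · -- lecturer-level left totality
    intro k hcard s hs
    by_cases hsl : s ∈ ls
    · obtain ⟨⟨a, b⟩, hz, hz1⟩ := Finset.mem_image.mp hsl
      simp only at hz1
      subst hz1
      exact ⟨b, Finset.mem_union_left _ hz⟩
    · have e1 := Finset.card_sdiff_add_card_inter (AlecW I W M k) ls
      have e2 := Finset.card_sdiff_add_card_inter (AlecW I M W k) rs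
      have hc := hcap k
      have hcard2 : ((AlecW I W M k) \ ls).card ≤ ((AlecW I M W k) \ rs).card := by omega
      obtain ⟨b, hb⟩ := hltk k hcard2 s (Finset.mem_sdiff.mpr ⟨hs, hsl⟩)
      exact ⟨b, Finset.mem_union_right _ (Finset.mem_biUnion.mpr ⟨k, Finset.mem_univ k, hb⟩)⟩
  · -- lecturer-level right totality
    intro k hcard t ht
    by_cases htr : t ∈ rs
    · obtain ⟨⟨a, b⟩, hz, hz1⟩ := Finset.mem_image.mp htr
      simp only at hz1
      subst hz1
      exact ⟨a, Finset.mem_union_left _ hz⟩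
    · have e1 := Finset.card_sdiff_add_card_inter (AlecW I W M k) ls
      have e2 := Finset.card_sdiff_add_card_inter (AlecW I M W k) rs
      have hc := hcap k
      have hcard2 : ((AlecW I M W k) \ rs).card ≤ ((AlecW I W M k) \ ls).card := by omega
      obtain ⟨a, ha⟩ := hrtk k hcard2 t (Finset.mem_sdiff.mpr ⟨ht, htr⟩)
      exact ⟨a, Finset.mem_union_right _ (Finset.mem_biUnion.mpr ⟨k, Finset.mem_univ k, ha⟩)⟩

end RHTExistsR

section RHTWalk

set_option linter.unusedSectionVars false

variable {S P L : Type} [Fintype S] [Fintype P] [Fintype L]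
  [DecidableEq S] [DecidableEq P] [DecidableEq L]

variable (I : SPAST S P L) (M W : Finset (S × P)) (R : Finset (S × S))

/-- `W`-side state with the "does not strictly prefer `M`" invariant. -/
def WV1 (s : S) : Prop :=
  ∃ p, (s, p) ∈ W ∧ (s, p) ∉ M ∧ ∀ q, (s, q) ∈ M → ¬(I.sPref s q p ∧ ¬ I.sPref s p q)

/-- `M`-side state reached through the pairing, with a strict lecturer preference. -/
def WV2 (t : S) : Prop :=
  ∃ q, (t, q) ∈ M ∧ (t, q) ∉ W ∧ ∃ s, (s, t) ∈ R ∧ lSt I (I.lec q) t s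

/-- `M`-side state where the student strictly prefers its `M`-project. -/
def WV3 (t : S) : Prop :=
  ∃ q, (t, q) ∈ M ∧ (t, q) ∉ W ∧ ∀ r, (t, r) ∈ W → (I.sPref t q r ∧ ¬ I.sPref t r q)

/-- `W`-side state reached through the pairing, with a weak lecturer preference. -/
def WV4 (s : S) : Prop :=
  ∃ p, (s, p) ∈ W ∧ (s, p) ∉ M ∧ ∃ t, (s, t) ∈ R ∧ I.lPref (I.lec p) s t

def WalkValid (x : S × Fin 4) : Prop :=
  (x.2 = 0 ∧ WV1 I M W x.1) ∨ (x.2 = 1 ∧ WV2 I M W R x.1) ∨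
  (x.2 = 2 ∧ WV3 I M W x.1) ∨ (x.2 = 3 ∧ WV4 I M W R x.1)

def WalkStep (x y : S × Fin 4) : Prop :=
  (x.2 = 0 ∧ y.2 = 1 ∧ (x.1, y.1) ∈ R) ∨
  (x.2 = 1 ∧ y.2 = 0 ∧ y.1 = x.1) ∨
  (x.2 = 2 ∧ y.2 = 3 ∧ (y.1, x.1) ∈ R) ∨
  (x.2 = 3 ∧ y.2 = 2 ∧ y.1 = x.1)

variable {I M W R}

lemma walk_back
    (hlu : ∀ z ∈ R, ∀ z' ∈ R, z.1 = z'.1 → z = z')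
    (hru : ∀ z ∈ R, ∀ z' ∈ R, z.2 = z'.2 → z = z')
    {x y z : S × Fin 4} (h1 : WalkStep R x z) (h2 : WalkStep R y z) : x = y := by
  rcases h1 with ⟨hx, hz, hR⟩ | ⟨hx, hz, hE⟩ | ⟨hx, hz, hR⟩ | ⟨hx, hz, hE⟩ <;>
    rcases h2 with ⟨hy, hz', hR'⟩ | ⟨hy, hz', hE'⟩ | ⟨hy, hz', hR'⟩ | ⟨hy, hz', hE'⟩ <;>
    first
      | (exact absurd (hz ▸ hz') (by decide))
      | skip
  · -- both via clause 1
    have h := hru _ hR _ hR' rfl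
    have hx1 : x.1 = y.1 := by injection h
    exact Prod.ext hx1 (hx.trans hy.symm)
  · -- both via clause 2
    exact Prod.ext (hE ▸ hE'.symm ▸ rfl) (hx.trans hy.symm)
  · -- both via clause 3
    have h := hlu _ hR _ hR' rfl
    have hx1 : x.1 = y.1 := by injection h
    exact Prod.ext hx1 (hx.trans hy.symm)
  · -- both via clause 4
    exact Prod.ext (hE ▸ hE'.symm ▸ rfl) (hx.trans hy.symm)

lemma walk_contra
    (hlu : ∀ z ∈ R, ∀ z' ∈ R, z.1 = z'.1 → z = z')
    (hru : ∀ z ∈ R, ∀ z' ∈ R, z.2 = z'.2 → z = z')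
    (htot : ∀ x, WalkValid I M W R x → ∃ y, WalkValid I M W R y ∧ WalkStep R x y)
    (x0 : S × Fin 4) (h0 : WalkValid I M W R x0)
    (hnp : ∀ y, WalkValid I M W R y → ¬ WalkStep R y x0) : False := by
  classical
  have hstep : ∀ x : {x : S × Fin 4 // WalkValid I M W R x},
      ∃ y : {x : S × Fin 4 // WalkValid I M W R x}, WalkStep R x.1 y.1 := by
    intro x
    obtain ⟨y, hy, hs⟩ := htot x.1 x.2
    exact ⟨⟨y, hy⟩, hs⟩
  choose F hF using hstep
  have hFinj : Function.Injective F := by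
    intro a b hab
    have h2 := hF b
    rw [← hab] at h2
    exact Subtype.ext (walk_back hlu hru (hF a) h2)
  set z0 : {x : S × Fin 4 // WalkValid I M W R x} := ⟨x0, h0⟩ with hz0
  have key : ∀ j : ℕ, F^[j + 1] z0 ≠ z0 := by
    intro j h
    have hs := hF (F^[j] z0)
    rw [← Function.iterate_succ_apply' F j z0] at hs
    rw [h] at hs
    exact hnp _ (F^[j] z0).2 hs
  have hginj : Function.Injective (fun n : ℕ => F^[n] z0) := by
    intro m n hmn
    simp only at hmn
    rcases lt_trichotomy m n with hl | he | hl
    · exfalso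
      have : n = m + (n - m) := by omega
      rw [this, Function.iterate_add_apply] at hmn
      have h2 : F^[n - m] z0 = z0 := ((hFinj.iterate m) hmn).symm
      have hnm : n - m = (n - m - 1) + 1 := by omega
      rw [hnm] at h2
      exact key _ h2
    · exact he
    · exfalso
      have : m = n + (m - n) := by omega
      rw [this, Function.iterate_add_apply] at hmn
      have h2 : F^[m - n] z0 = z0 := (hFinj.iterate n) hmn
      have hnm : m - n = (m - n - 1) + 1 := by omega
      rw [hnm] at h2
      exact key _ h2
  obtain ⟨m, n, hne, he⟩ := Finite.exists_ne_map_eq_of_infinite (fun n : ℕ => F^[n] z0)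
  exact hne (hginj he)

end RHTWalk

section RHTTotal

set_option linter.unusedSectionVars false
set_option maxHeartbeats 1000000

variable {S P L : Type} [Fintype S] [Fintype P] [Fintype L]
  [DecidableEq S] [DecidableEq P] [DecidableEq L]
variable {I : SPAST S P L} {M W : Finset (S × P)} {R : Finset (S × S)}

lemma walk_total
    (hM : I.SuperStable M) (hW : I.WeaklyStable W)
    (hstruct : ∀ z ∈ R, ∃ p q, I.lec p = I.lec q ∧ z.1 ∈ AprW W M p ∧ z.2 ∈ AprW M W q)
    (hlu : ∀ z ∈ R, ∀ z' ∈ R, z.1 = z'.1 → z = z')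
    (hru : ∀ z ∈ R, ∀ z' ∈ R, z.2 = z'.2 → z = z')
    (hPR2 : ∀ p, (AprW W M p).card ≤ (AprW M W p).card →
      ∀ s ∈ AprW W M p, ∃ t, t ∈ AprW M W p ∧ (s, t) ∈ R)
    (hPR3 : ∀ p, (AprW M W p).card ≤ (AprW W M p).card →
      ∀ t ∈ AprW M W p, ∃ s, s ∈ AprW W M p ∧ (s, t) ∈ R)
    (hPR4 : ∀ k, (AlecW I W M k).card ≤ (AlecW I M W k).card →
      ∀ s ∈ AlecW I W M k, ∃ t, (s, t) ∈ R)
    (hPR5 : ∀ k, (AlecW I M W k).card ≤ (AlecW I W M k).card →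
      ∀ t ∈ AlecW I M W k, ∃ s, (s, t) ∈ R) :
    ∀ x, WalkValid I M W R x → ∃ y, WalkValid I M W R y ∧ WalkStep R x y := by
  intro x hx
  rcases hx with ⟨hx0, hV⟩ | ⟨hx1, hV⟩ | ⟨hx2, hV⟩ | ⟨hx3, hV⟩
  · -- state V1
    obtain ⟨p, hsw, hsm, hI1⟩ := hV
    have hacc : p ∈ I.acc x.1 := hW.1.1 (x.1, p) hsw
    have hoks : okL I (I.lec p) x.1 := ⟨p, hacc, rfl⟩
    rcases super_unpack hM hacc hsm hI1 hoks with ⟨hfull, hall⟩ | ⟨hlt, hlf, hsnot, hall⟩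
    · have hsA : x.1 ∈ AprW W M p := mem_AprW.mpr ⟨hsw, hsm⟩
      have hcard : (AprW W M p).card ≤ (AprW M W p).card :=
        AprW_card_le (le_trans (projAsg_card_le hW.1 p) (le_of_eq hfull.symm))
      obtain ⟨t, htB, hRp⟩ := hPR2 p hcard x.1 hsA
      obtain ⟨htm, htw⟩ := mem_AprW.mp htB
      exact ⟨(t, 1),
        Or.inr (Or.inl ⟨rfl, p, htm, htw, x.1, hRp, hall t (mem_projAsg_iff.mpr htm)⟩),
        Or.inl ⟨hx0, rfl, hRp⟩⟩
    · have hsA : x.1 ∈ AlecW I W M (I.lec p) := mem_AlecW.mpr ⟨p, rfl, hsw, hsm⟩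
      have hcard : (AlecW I W M (I.lec p)).card ≤ (AlecW I M W (I.lec p)).card :=
        AlecW_card_le hW.1.2.1 hM.1.2.1
          (le_trans (lecAsg_card_le hW.1 _) (le_of_eq hlf.symm))
      obtain ⟨t, hRp⟩ := hPR4 (I.lec p) hcard x.1 hsA
      obtain ⟨p', q', hlecpq, hs', ht'⟩ := hstruct (x.1, t) hRp
      have hp' : p' = p := hW.1.2.1 x.1 p' p (mem_AprW.mp hs').1 hsw
      have hlecq : I.lec q' = I.lec p := by rw [← hlecpq, hp']
      obtain ⟨htm, htw⟩ := mem_AprW.mp ht'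
      have htlec : t ∈ lecAsg I M (I.lec p) := mem_lecAsg_iff.mpr ⟨q', htm, hlecq⟩
      refine ⟨(t, 1),
        Or.inr (Or.inl ⟨rfl, q', htm, htw, x.1, hRp, ?_⟩),
        Or.inl ⟨hx0, rfl, hRp⟩⟩
      rw [hlecq]
      exact hall t htlec
  · -- state V2
    obtain ⟨q, htM, htW, s, hRst, hts⟩ := hV
    obtain ⟨p', q'', hlecpq, hs', ht''⟩ := hstruct (s, x.1) hRst
    have hq'' : q'' = q := hM.1.2.1 x.1 q'' q (mem_AprW.mp ht'').1 htM
    have hlecp' : I.lec p' = I.lec q := by rw [hlecpq, hq'']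
    obtain ⟨hsw', hsm'⟩ := mem_AprW.mp hs'
    have hoks' : okL I (I.lec q) s := ⟨p', hW.1.1 _ hsw', hlecp'⟩
    have hokt : okL I (I.lec q) x.1 := ⟨q, hM.1.1 _ htM, rfl⟩
    have hJ2 : (((projAsg W q).card < I.c q ∧
          (lecAsg I W (I.lec q)).card < I.d (I.lec q)) ∨
        ((projAsg W q).card < I.c q ∧ (lecAsg I W (I.lec q)).card = I.d (I.lec q) ∧
          (x.1 ∈ lecAsg I W (I.lec q) ∨
          ∃ u : S, I.WorstIn (I.lec q) (lecAsg I W (I.lec q)) u ∧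
            (I.lPref (I.lec q) x.1 u ∧ ¬I.lPref (I.lec q) u x.1))) ∨
        ((projAsg W q).card = I.c q ∧
          ∃ u : S, I.WorstIn (I.lec q) (projAsg W q) u ∧
            (I.lPref (I.lec q) x.1 u ∧ ¬I.lPref (I.lec q) u x.1))) := by
      by_cases hqf : (projAsg W q).card = I.c q
      · have hcard : (AprW M W q).card ≤ (AprW W M q).card :=
          AprW_card_le (le_trans (projAsg_card_le hM.1 q) (le_of_eq hqf.symm))
        obtain ⟨s2, hs2, hR2⟩ := hPR3 q hcard x.1 (mem_AprW.mpr ⟨htM, htW⟩)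
        have heqz : (s2, x.1) = (s, x.1) := hru _ hR2 _ hRst rfl
        have hs2s : s2 = s := by injection heqz
        rw [hs2s] at hs2
        have hsq : s ∈ projAsg W q := mem_projAsg_iff.mpr (mem_AprW.mp hs2).1
        obtain ⟨w, hw⟩ := exists_worst (I.lec q) _ ⟨s, hsq⟩
          (fun u hu => okL_of_projAsg hW.1 hu)
        have h1 : lSt I (I.lec q) x.1 w :=
          lSt_lpref_trans hokt hoks' (okL_of_projAsg hW.1 hw.1) hts (hw.2 s hsq)
        exact Or.inr (Or.inr ⟨hqf, w, hw, h1.1, h1.2⟩)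
      · have hqlt := lt_of_le_of_ne (projAsg_card_le hW.1 q) hqf
        by_cases hkf : (lecAsg I W (I.lec q)).card = I.d (I.lec q)
        · have hslec : s ∈ lecAsg I W (I.lec q) := mem_lecAsg_iff.mpr ⟨p', hsw', hlecp'⟩
          obtain ⟨w, hw⟩ := exists_worst (I.lec q) _ ⟨s, hslec⟩
            (fun u hu => okL_of_lecAsg hW.1 hu)
          have h1 : lSt I (I.lec q) x.1 w :=
            lSt_lpref_trans hokt hoks' (okL_of_lecAsg hW.1 hw.1) hts (hw.2 s hslec)
          exact Or.inr (Or.inl ⟨hqlt, hkf, Or.inr ⟨w, hw, h1.1, h1.2⟩⟩)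
        · exact Or.inl ⟨hqlt, lt_of_le_of_ne (lecAsg_card_le hW.1 _) hkf⟩
    have h3 : ¬ ∀ r, (x.1, r) ∈ W → (I.sPref x.1 q r ∧ ¬ I.sPref x.1 r q) :=
      fun hall => hW.2 x.1 q ⟨hM.1.1 _ htM, htW, hall, hJ2⟩
    push_neg at h3
    obtain ⟨r, hrW, hrimp⟩ := h3
    have hrM : (x.1, r) ∉ M := by
      intro hrm
      have : r = q := hM.1.2.1 x.1 r q hrm htM
      rw [this] at hrW
      exact htW hrW
    refine ⟨(x.1, 0), Or.inl ⟨rfl, r, hrW, hrM, ?_⟩, Or.inr (Or.inl ⟨hx1, rfl, rfl⟩)⟩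
    intro q2 hq2
    have : q2 = q := hM.1.2.1 x.1 q2 q hq2 htM
    subst this
    exact fun hc => hc.2 (hrimp hc.1)
  · -- state V3
    obtain ⟨q, htM, htW, ha⟩ := hV
    have hacc : q ∈ I.acc x.1 := hM.1.1 _ htM
    have hokt : okL I (I.lec q) x.1 := ⟨q, hacc, rfl⟩
    rcases weak_unpack hW hacc htW ha hokt with ⟨hqfull, hall⟩ | ⟨hqlt, hkf, htnot, hall⟩
    · have hcard : (AprW M W q).card ≤ (AprW W M q).card :=
        AprW_card_le (le_trans (projAsg_card_le hM.1 q) (le_of_eq hqfull.symm))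
      obtain ⟨s, hsA, hRs⟩ := hPR3 q hcard x.1 (mem_AprW.mpr ⟨htM, htW⟩)
      obtain ⟨hsw, hsm⟩ := mem_AprW.mp hsA
      exact ⟨(s, 3),
        Or.inr (Or.inr (Or.inr ⟨rfl, q, hsw, hsm, x.1, hRs,
          hall s (mem_projAsg_iff.mpr hsw)⟩)),
        Or.inr (Or.inr (Or.inl ⟨hx2, rfl, hRs⟩))⟩
    · have htA : x.1 ∈ AlecW I M W (I.lec q) := mem_AlecW.mpr ⟨q, rfl, htM, htW⟩
      have hcard : (AlecW I M W (I.lec q)).card ≤ (AlecW I W M (I.lec q)).card :=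
        AlecW_card_le hM.1.2.1 hW.1.2.1
          (le_trans (lecAsg_card_le hM.1 _) (le_of_eq hkf.symm))
      obtain ⟨s, hRs⟩ := hPR5 (I.lec q) hcard x.1 htA
      obtain ⟨p', q'', hlecpq, hs', ht''⟩ := hstruct (s, x.1) hRs
      have hq'' : q'' = q := hM.1.2.1 x.1 q'' q (mem_AprW.mp ht'').1 htM
      have hlecp' : I.lec p' = I.lec q := by rw [hlecpq, hq'']
      obtain ⟨hsw', hsm'⟩ := mem_AprW.mp hs'
      have hslec : s ∈ lecAsg I W (I.lec q) := mem_lecAsg_iff.mpr ⟨p', hsw', hlecp'⟩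
      refine ⟨(s, 3),
        Or.inr (Or.inr (Or.inr ⟨rfl, p', hsw', hsm', x.1, hRs, ?_⟩)),
        Or.inr (Or.inr (Or.inl ⟨hx2, rfl, hRs⟩))⟩
      rw [hlecp']
      exact hall s hslec
  · -- state V4
    obtain ⟨p, hsw, hsm, t, hRt, hpref⟩ := hV
    obtain ⟨p', q', hlecpq, hs', ht'⟩ := hstruct (x.1, t) hRt
    have hp' : p' = p := hW.1.2.1 x.1 p' p (mem_AprW.mp hs').1 hsw
    have hlecq' : I.lec q' = I.lec p := by rw [← hlecpq, hp']
    obtain ⟨htm, htw⟩ := mem_AprW.mp ht'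
    by_cases hEx : ∃ q2, (x.1, q2) ∈ M ∧ (I.sPref x.1 q2 p ∧ ¬ I.sPref x.1 p q2)
    · obtain ⟨q2, hq2M, hstr⟩ := hEx
      have hq2W : (x.1, q2) ∉ W := by
        intro hq2W
        have hq2p : q2 = p := hW.1.2.1 x.1 q2 p hq2W hsw
        subst hq2p
        exact hstr.2 (I.sRefl x.1 q2 (hW.1.1 _ hq2W))
      refine ⟨(x.1, 2), Or.inr (Or.inr (Or.inl ⟨rfl, q2, hq2M, hq2W, ?_⟩)),
        Or.inr (Or.inr (Or.inr ⟨hx3, rfl, rfl⟩))⟩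
      intro r hrW
      have : r = p := hW.1.2.1 x.1 r p hrW hsw
      subst this
      exact hstr
    · exfalso
      have hI1 : ∀ q2, (x.1, q2) ∈ M → ¬(I.sPref x.1 q2 p ∧ ¬ I.sPref x.1 p q2) :=
        fun q2 h hc => hEx ⟨q2, h, hc⟩
      have hoks : okL I (I.lec p) x.1 := ⟨p, hW.1.1 _ hsw, rfl⟩
      rcases super_unpack hM (hW.1.1 _ hsw) hsm hI1 hoks with ⟨hfull, hall⟩ | ⟨_, _, _, hall⟩
      · have hcard : (AprW W M p).card ≤ (AprW M W p).card :=
          AprW_card_le (le_trans (projAsg_card_le hW.1 p) (le_of_eq hfull.symm))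
        obtain ⟨t2, ht2, hR2⟩ := hPR2 p hcard x.1 (mem_AprW.mpr ⟨hsw, hsm⟩)
        have heqz : (x.1, t2) = (x.1, t) := hlu _ hR2 _ hRt rfl
        have ht2t : t2 = t := by injection heqz
        rw [ht2t] at ht2
        exact (hall t (mem_projAsg_iff.mpr (mem_AprW.mp ht2).1)).2 hpref
      · have htlec : t ∈ lecAsg I M (I.lec p) := mem_lecAsg_iff.mpr ⟨q', htm, hlecq'⟩
        exact (hall t htlec).2 hpref

end RHTTotal

section RHTMain

set_option linter.unusedSectionVars false
set_option maxHeartbeats 1000000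

variable {S P L : Type} [Fintype S] [Fintype P] [Fintype L]
  [DecidableEq S] [DecidableEq P] [DecidableEq L]
variable {I : SPAST S P L} {M W : Finset (S × P)}

lemma super_weak_counts (hM : I.SuperStable M) (hW : I.WeaklyStable W) (k : L) :
    (lecAsg I W k).card = (lecAsg I M k).card := by
  classical
  obtain ⟨R, hstruct, hlu, hru, hPR2, hPR3, hPR4, hPR5⟩ :=
    exists_R I W M hW.1.2.1 hM.1.2.1
  have htot := walk_total hM hW hstruct hlu hru hPR2 hPR3 hPR4 hPR5
  by_contra hne
  have e1 := lec_split (I := I) (W := W) (M := M) hW.1.2.1 k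
  have e2 := lec_split (I := I) (W := M) (M := W) hM.1.2.1 k
  rw [ClecW_comm] at e2
  rcases lt_or_gt_of_ne hne with hlt | hgt
  · -- (lecAsg I W k).card < (lecAsg I M k).card : some M-side student at k unpaired
    have hnotall : ¬ ∀ t ∈ AlecW I M W k, ∃ s, (s, t) ∈ R := by
      intro hall
      set g : S → S := fun t => if h : ∃ s, (s, t) ∈ R then h.choose else t with hg
      have hgmem : ∀ t ∈ AlecW I M W k, (g t, t) ∈ R := by
        intro t ht
        have hex := hall t ht
        have : g t = hex.choose := by rw [hg]; exact dif_pos hex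
        rw [this]
        exact hex.choose_spec
      have hinj : Set.InjOn g (AlecW I M W k) := by
        intro t1 h1 t2 h2 he
        have e1' := hgmem t1 (Finset.mem_coe.mp h1)
        have e2' := hgmem t2 (Finset.mem_coe.mp h2)
        rw [he] at e1'
        have heq := hlu _ e1' _ e2' rfl
        injection heq
      have hcardle : (AlecW I M W k).card ≤ (AlecW I W M k).card := by
        apply Finset.card_le_card_of_injOn g ?_ hinj
        intro t ht
        have hR := hgmem t ht
        obtain ⟨p', q', hlec, hs', ht'⟩ := hstruct (g t, t) hR
        obtain ⟨q, hlq, hmq, hnwq⟩ := mem_AlecW.mp ht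
        have hq' : q' = q := hM.1.2.1 t q' q (mem_AprW.mp ht').1 hmq
        exact mem_AlecW.mpr ⟨p', by rw [hlec, hq', hlq], (mem_AprW.mp hs').1,
          (mem_AprW.mp hs').2⟩
      omega
    push_neg at hnotall
    obtain ⟨t0, ht0A, ht0np⟩ := hnotall
    obtain ⟨q0, hlq0, ht0m, ht0w⟩ := mem_AlecW.mp ht0A
    by_cases ha : ∀ r, (t0, r) ∈ W → (I.sPref t0 q0 r ∧ ¬ I.sPref t0 r q0)
    · rcases weak_unpack hW (hM.1.1 _ ht0m) ht0w ha ⟨q0, hM.1.1 _ ht0m, rfl⟩ with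
        ⟨hqfull, _⟩ | ⟨_, hkf, _, _⟩
      · obtain ⟨s, _, hR0⟩ := hPR3 q0
          (AprW_card_le (le_trans (projAsg_card_le hM.1 q0) (le_of_eq hqfull.symm)))
          t0 (mem_AprW.mpr ⟨ht0m, ht0w⟩)
        exact ht0np s hR0
      · rw [hlq0] at hkf
        have hle := lecAsg_card_le hM.1 k
        omega
    · push_neg at ha
      obtain ⟨r0, hr0W, hrimp⟩ := ha
      have hr0M : (t0, r0) ∉ M := by
        intro h
        have : r0 = q0 := hM.1.2.1 t0 r0 q0 h ht0m
        rw [this] at hr0W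
        exact ht0w hr0W
      have h0 : WalkValid I M W R (t0, (0 : Fin 4)) := by
        refine Or.inl ⟨rfl, r0, hr0W, hr0M, ?_⟩
        intro q2 hq2
        have : q2 = q0 := hM.1.2.1 t0 q2 q0 hq2 ht0m
        subst this
        exact fun hc => hc.2 (hrimp hc.1)
      refine walk_contra hlu hru htot (t0, (0 : Fin 4)) h0 ?_
      intro y hy hstepy
      rcases hstepy with ⟨h1, h2, _⟩ | ⟨h1, h2, he⟩ | ⟨h1, h2, _⟩ | ⟨h1, h2, _⟩
      · simp at h2
      · -- y.2 = 1, y.1 = t0 : a WV2 state, has a left partner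
        rcases hy with ⟨hz, _⟩ | ⟨hz, hV⟩ | ⟨hz, _⟩ | ⟨hz, _⟩
        · exact absurd (hz.symm.trans h1) (by decide)
        · obtain ⟨q, _, _, s, hRs, _⟩ := hV
          rw [← he] at hRs
          exact ht0np s hRs
        · exact absurd (hz.symm.trans h1) (by decide)
        · exact absurd (hz.symm.trans h1) (by decide)
      · simp at h2
      · simp at h2
  · -- (lecAsg I M k).card < (lecAsg I W k).card : some W-side student at k unpaired
    have hnotall : ¬ ∀ s ∈ AlecW I W M k, ∃ t, (s, t) ∈ R := by
      intro hall
      set g : S → S := fun s => if h : ∃ t, (s, t) ∈ R then h.choose else s with hg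
      have hgmem : ∀ s ∈ AlecW I W M k, (s, g s) ∈ R := by
        intro s hs
        have hex := hall s hs
        have : g s = hex.choose := by rw [hg]; exact dif_pos hex
        rw [this]
        exact hex.choose_spec
      have hinj : Set.InjOn g (AlecW I W M k) := by
        intro s1 h1 s2 h2 he
        have e1' := hgmem s1 (Finset.mem_coe.mp h1)
        have e2' := hgmem s2 (Finset.mem_coe.mp h2)
        rw [he] at e1'
        have heq := hru _ e1' _ e2' rfl
        injection heq
      have hcardle : (AlecW I W M k).card ≤ (AlecW I M W k).card := by
        apply Finset.card_le_card_of_injOn g ?_ hinj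
        intro s hs
        have hR := hgmem s hs
        obtain ⟨p', q', hlec, hs', ht'⟩ := hstruct (s, g s) hR
        obtain ⟨p, hlp, hwp, hnp⟩ := mem_AlecW.mp hs
        have hp' : p' = p := hW.1.2.1 s p' p (mem_AprW.mp hs').1 hwp
        exact mem_AlecW.mpr ⟨q', by rw [← hlec, hp', hlp], (mem_AprW.mp ht').1,
          (mem_AprW.mp ht').2⟩
      omega
    push_neg at hnotall
    obtain ⟨s0, hs0A, hs0np⟩ := hnotall
    obtain ⟨p0, hlp0, hs0w, hs0m⟩ := mem_AlecW.mp hs0A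
    by_cases hI1 : ∀ q2, (s0, q2) ∈ M → ¬(I.sPref s0 q2 p0 ∧ ¬ I.sPref s0 p0 q2)
    · rcases super_unpack hM (hW.1.1 _ hs0w) hs0m hI1 ⟨p0, hW.1.1 _ hs0w, rfl⟩ with
        ⟨hfull, _⟩ | ⟨_, hkf, _, _⟩
      · obtain ⟨t, _, hR0⟩ := hPR2 p0
          (AprW_card_le (le_trans (projAsg_card_le hW.1 p0) (le_of_eq hfull.symm)))
          s0 (mem_AprW.mpr ⟨hs0w, hs0m⟩)
        exact hs0np t hR0
      · rw [hlp0] at hkf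
        have hle := lecAsg_card_le hW.1 k
        omega
    · push_neg at hI1
      obtain ⟨q0, hq0M, hstr⟩ := hI1
      have hq0W : (s0, q0) ∉ W := by
        intro h
        have : q0 = p0 := hW.1.2.1 s0 q0 p0 h hs0w
        subst this
        exact hstr.2 (I.sRefl s0 q0 (hW.1.1 _ h))
      have h0 : WalkValid I M W R (s0, (2 : Fin 4)) := by
        refine Or.inr (Or.inr (Or.inl ⟨rfl, q0, hq0M, hq0W, ?_⟩))
        intro r hrW
        have : r = p0 := hW.1.2.1 s0 r p0 hrW hs0w
        subst this
        exact hstr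
      refine walk_contra hlu hru htot (s0, (2 : Fin 4)) h0 ?_
      intro y hy hstepy
      rcases hstepy with ⟨h1, h2, _⟩ | ⟨h1, h2, _⟩ | ⟨h1, h2, _⟩ | ⟨h1, h2, he⟩
      · simp at h2
      · simp at h2
      · simp at h2
      · -- y.2 = 3, y.1 = s0 : a WV4 state, has a right partner
        rcases hy with ⟨hz, _⟩ | ⟨hz, _⟩ | ⟨hz, _⟩ | ⟨hz, hV⟩
        · exact absurd (hz.symm.trans h1) (by decide)
        · exact absurd (hz.symm.trans h1) (by decide)
        · exact absurd (hz.symm.trans h1) (by decide)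
        · obtain ⟨p, _, _, t, hRt, _⟩ := hV
          rw [← he] at hRt
          exact hs0np t hRt

end RHTMain

end SPAST

open SPAST in
theorem weakly_stable_lecturer_counts_eq_of_super_stable_exists {S P L : Type} [Fintype S] [Fintype P] [Fintype L]
    [DecidableEq S] [DecidableEq P] [DecidableEq L]
    (I : SPAST S P L) (hss : ∃ M : Finset (S × P), SuperStable I M)
    (M1 M2 : Finset (S × P)) (h1 : WeaklyStable I M1) (h2 : WeaklyStable I M2) :
    ∀ k : L, (lecAsg I M1 k).card = (lecAsg I M2 k).card := by
  obtain ⟨M, hM⟩ := hss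
  intro k
  have e1 := super_weak_counts hM h1 k
  have e2 := super_weak_counts hM h2 k
  rw [e1]
  exact e2.symm
end

section
/- Let I be an instance of SPA-ST that admits a super-stable matching. Then for any two weakly stable matchings M1 and M2 in I, a student is unmatched in M1 if and only if she is unmatched in M2. -/
open scoped Classical

section Aux

open SPAST

variable {S P L : Type} [Fintype S] [Fintype P] [Fintype L]
  [DecidableEq S] [DecidableEq P] [DecidableEq L]

/-- A partial pairing between two finsets saturating the smaller side. -/
lemma SPASTAux.exists_pairing {α β : Type} [DecidableEq α] [DecidableEq β]
    (A : Finset α) (B : Finset β) :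
    ∃ C : Finset (α × β),
      (∀ x ∈ C, x.1 ∈ A ∧ x.2 ∈ B) ∧
      (∀ x ∈ C, ∀ y ∈ C, x.1 = y.1 → x = y) ∧
      (∀ x ∈ C, ∀ y ∈ C, x.2 = y.2 → x = y) ∧
      (A.card ≤ B.card → ∀ a ∈ A, ∃ b, (a, b) ∈ C) ∧
      (B.card ≤ A.card → ∀ b ∈ B, ∃ a, (a, b) ∈ C) := by
  induction A using Finset.induction_on generalizing B with
  | empty =>
      refine ⟨∅, ?_, ?_, ?_, ?_, ?_⟩
      · intro x hx; exact absurd hx (Finset.notMem_empty x)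
      · intro x hx; exact absurd hx (Finset.notMem_empty x)
      · intro x hx; exact absurd hx (Finset.notMem_empty x)
      · intro _ a ha; exact absurd ha (Finset.notMem_empty a)
      · intro h b hb
        have : B = ∅ := Finset.card_eq_zero.mp (Nat.le_zero.mp (by simpa using h))
        subst this; exact absurd hb (Finset.notMem_empty b)
  | @insert a A' ha ih =>
      rcases B.eq_empty_or_nonempty with hB | ⟨b, hb⟩
      · subst hB
        refine ⟨∅, ?_, ?_, ?_, ?_, ?_⟩
        · intro x hx; exact absurd hx (Finset.notMem_empty x)
        · intro x hx; exact absurd hx (Finset.notMem_empty x)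
        · intro x hx; exact absurd hx (Finset.notMem_empty x)
        · intro h
          exfalso
          rw [Finset.card_empty, Nat.le_zero, Finset.card_eq_zero] at h
          exact (Finset.insert_ne_empty a A') h
        · intro _ b hb; exact absurd hb (Finset.notMem_empty b)
      · obtain ⟨C', hmem, huL, huR, hsL, hsR⟩ := ih (B.erase b)
        refine ⟨insert (a, b) C', ?_, ?_, ?_, ?_, ?_⟩
        · intro x hx
          rcases Finset.mem_insert.mp hx with rfl | hx
          · exact ⟨Finset.mem_insert_self a A', hb⟩
          · obtain ⟨h1, h2⟩ := hmem x hx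
            exact ⟨Finset.mem_insert_of_mem h1, Finset.mem_of_mem_erase h2⟩
        · intro x hx y hy hxy
          rcases Finset.mem_insert.mp hx with rfl | hx <;>
            rcases Finset.mem_insert.mp hy with rfl | hy
          · rfl
          · exfalso; apply ha; have h2 := (hmem y hy).1; rw [← hxy] at h2; exact h2
          · exfalso; apply ha; have h2 := (hmem x hx).1; rw [hxy] at h2; exact h2
          · exact huL x hx y hy hxy
        · intro x hx y hy hxy
          rcases Finset.mem_insert.mp hx with rfl | hx <;>
            rcases Finset.mem_insert.mp hy with rfl | hy
          · rfl
          · exfalso; have h2 := (hmem y hy).2; rw [← hxy] at h2; simp at h2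
          · exfalso; have h2 := (hmem x hx).2; rw [hxy] at h2; simp at h2
          · exact huR x hx y hy hxy
        · intro hcard a' ha'
          rcases Finset.mem_insert.mp ha' with rfl | ha'
          · exact ⟨b, Finset.mem_insert_self _ _⟩
          · have hc : A'.card ≤ (B.erase b).card := by
              rw [Finset.card_erase_of_mem hb]
              rw [Finset.card_insert_of_notMem ha] at hcard
              omega
            obtain ⟨b', hb'⟩ := hsL hc a' ha'
            exact ⟨b', Finset.mem_insert_of_mem hb'⟩
        · intro hcard b' hb'
          by_cases hbb : b' = b
          · exact ⟨a, by simp [hbb]⟩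
          · have hc : (B.erase b).card ≤ A'.card := by
              rw [Finset.card_erase_of_mem hb]
              rw [Finset.card_insert_of_notMem ha] at hcard
              omega
            obtain ⟨a', ha'⟩ := hsR hc b' (Finset.mem_erase.mpr ⟨hbb, hb'⟩)
            exact ⟨a', Finset.mem_insert_of_mem ha'⟩

/-- Two-level pairing: a partial pairing between `A` and `B` that pairs within
fibers of `f` whenever possible, saturates fibers whose `A`-side is not larger,
and saturates globally whenever one side is not larger. -/
lemma SPASTAux.exists_pairing_two_level {α γ : Type} [DecidableEq α] [DecidableEq γ] [Fintype γ]
    (A B : Finset α) (f : α → γ) :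
    ∃ C : Finset (α × α),
      (∀ x ∈ C, x.1 ∈ A ∧ x.2 ∈ B) ∧
      (∀ x ∈ C, ∀ y ∈ C, x.1 = y.1 → x = y) ∧
      (∀ x ∈ C, ∀ y ∈ C, x.2 = y.2 → x = y) ∧
      (∀ x ∈ C, f x.1 = f x.2 ∨
        ((B.filter (fun z => f z = f x.1)).card < (A.filter (fun z => f z = f x.1)).card ∧
         (A.filter (fun z => f z = f x.2)).card < (B.filter (fun z => f z = f x.2)).card)) ∧
      (∀ a ∈ A, ((A.filter (fun z => f z = f a)).card ≤ (B.filter (fun z => f z = f a)).card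
          ∨ A.card ≤ B.card) → ∃ b, (a, b) ∈ C) ∧
      (∀ b ∈ B, ((B.filter (fun z => f z = f b)).card ≤ (A.filter (fun z => f z = f b)).card
          ∨ B.card ≤ A.card) → ∃ a, (a, b) ∈ C) := by
  have h1 : ∀ p : γ, ∃ Cp : Finset (α × α),
      (∀ x ∈ Cp, x.1 ∈ A.filter (fun z => f z = p) ∧ x.2 ∈ B.filter (fun z => f z = p)) ∧
      (∀ x ∈ Cp, ∀ y ∈ Cp, x.1 = y.1 → x = y) ∧
      (∀ x ∈ Cp, ∀ y ∈ Cp, x.2 = y.2 → x = y) ∧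
      ((A.filter (fun z => f z = p)).card ≤ (B.filter (fun z => f z = p)).card →
        ∀ a ∈ A.filter (fun z => f z = p), ∃ b, (a, b) ∈ Cp) ∧
      ((B.filter (fun z => f z = p)).card ≤ (A.filter (fun z => f z = p)).card →
        ∀ b ∈ B.filter (fun z => f z = p), ∃ a, (a, b) ∈ Cp) :=
    fun p => SPASTAux.exists_pairing _ _
  choose Cp hp using h1
  classical
  set U1 : Finset (α × α) := Finset.univ.biUnion Cp with hU1def
  have memU1 : ∀ x ∈ U1, x.1 ∈ A ∧ x.2 ∈ B ∧ f x.1 = f x.2 ∧ x ∈ Cp (f x.1) := by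
    intro x hx
    obtain ⟨p, -, hxp⟩ := Finset.mem_biUnion.mp hx
    obtain ⟨h1', h2'⟩ := (hp p).1 x hxp
    obtain ⟨hA, hfp⟩ := Finset.mem_filter.mp h1'
    obtain ⟨hB, hfp2⟩ := Finset.mem_filter.mp h2'
    exact ⟨hA, hB, by rw [hfp, hfp2], by rw [hfp]; exact hxp⟩
  have uL1 : ∀ x ∈ U1, ∀ y ∈ U1, x.1 = y.1 → x = y := by
    intro x hx y hy hxy
    have hx' := (memU1 x hx).2.2.2
    have hy' := (memU1 y hy).2.2.2
    rw [← hxy] at hy'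
    exact (hp (f x.1)).2.1 x hx' y hy' hxy
  have uR1 : ∀ x ∈ U1, ∀ y ∈ U1, x.2 = y.2 → x = y := by
    intro x hx y hy hxy
    have hfx := (memU1 x hx).2.2.1
    have hfy := (memU1 y hy).2.2.1
    have hx' := (memU1 x hx).2.2.2
    have hy' := (memU1 y hy).2.2.2
    have : f y.1 = f x.1 := by rw [hfx, hfy, hxy]
    rw [this] at hy'
    exact (hp (f x.1)).2.2.1 x hx' y hy' hxy
  have hsub1 : U1.image Prod.fst ⊆ A := by
    intro z hz; obtain ⟨x, hx, rfl⟩ := Finset.mem_image.mp hz; exact (memU1 x hx).1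
  have hsub2 : U1.image Prod.snd ⊆ B := by
    intro z hz; obtain ⟨x, hx, rfl⟩ := Finset.mem_image.mp hz; exact (memU1 x hx).2.1
  have hcard1 : (U1.image Prod.fst).card = U1.card :=
    Finset.card_image_of_injOn (fun x hx y hy h => uL1 x hx y hy h)
  have hcard2 : (U1.image Prod.snd).card = U1.card :=
    Finset.card_image_of_injOn (fun x hx y hy h => uR1 x hx y hy h)
  obtain ⟨C2, c2mem, c2uL, c2uR, c2sL, c2sR⟩ :=
    SPASTAux.exists_pairing (A \ U1.image Prod.fst) (B \ U1.image Prod.snd)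
  refine ⟨U1 ∪ C2, ?_, ?_, ?_, ?_, ?_, ?_⟩
  · intro x hx
    rcases Finset.mem_union.mp hx with hx | hx
    · exact ⟨(memU1 x hx).1, (memU1 x hx).2.1⟩
    · obtain ⟨h1', h2'⟩ := c2mem x hx
      exact ⟨(Finset.mem_sdiff.mp h1').1, (Finset.mem_sdiff.mp h2').1⟩
  · intro x hx y hy hxy
    rcases Finset.mem_union.mp hx with hx | hx <;> rcases Finset.mem_union.mp hy with hy | hy
    · exact uL1 x hx y hy hxy
    · exfalso
      exact (Finset.mem_sdiff.mp (c2mem y hy).1).2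
        (Finset.mem_image.mpr ⟨x, hx, hxy⟩)
    · exfalso
      exact (Finset.mem_sdiff.mp (c2mem x hx).1).2
        (Finset.mem_image.mpr ⟨y, hy, hxy.symm⟩)
    · exact c2uL x hx y hy hxy
  · intro x hx y hy hxy
    rcases Finset.mem_union.mp hx with hx | hx <;> rcases Finset.mem_union.mp hy with hy | hy
    · exact uR1 x hx y hy hxy
    · exfalso
      exact (Finset.mem_sdiff.mp (c2mem y hy).2).2
        (Finset.mem_image.mpr ⟨x, hx, hxy⟩)
    · exfalso
      exact (Finset.mem_sdiff.mp (c2mem x hx).2).2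
        (Finset.mem_image.mpr ⟨y, hy, hxy.symm⟩)
    · exact c2uR x hx y hy hxy
  · intro x hx
    rcases Finset.mem_union.mp hx with hx | hx
    · exact Or.inl (memU1 x hx).2.2.1
    · refine Or.inr ⟨?_, ?_⟩
      · by_contra h
        push_neg at h
        have hx1 := Finset.mem_sdiff.mp (c2mem x hx).1
        obtain ⟨b, hb⟩ := (hp (f x.1)).2.2.2.1 h x.1 (Finset.mem_filter.mpr ⟨hx1.1, rfl⟩)
        exact hx1.2 (Finset.mem_image.mpr
          ⟨(x.1, b), Finset.mem_biUnion.mpr ⟨f x.1, Finset.mem_univ _, hb⟩, rfl⟩)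
      · by_contra h
        push_neg at h
        have hx2 := Finset.mem_sdiff.mp (c2mem x hx).2
        obtain ⟨a, hb⟩ := (hp (f x.2)).2.2.2.2 h x.2 (Finset.mem_filter.mpr ⟨hx2.1, rfl⟩)
        exact hx2.2 (Finset.mem_image.mpr
          ⟨(a, x.2), Finset.mem_biUnion.mpr ⟨f x.2, Finset.mem_univ _, hb⟩, rfl⟩)
  · intro a haA hcond
    by_cases himg : a ∈ U1.image Prod.fst
    · obtain ⟨x, hxU, hxa⟩ := Finset.mem_image.mp himg
      refine ⟨x.2, ?_⟩
      have hxe : (a, x.2) = x := by rw [← hxa]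
      rw [hxe]
      exact Finset.mem_union_left _ hxU
    · rcases hcond with hfib | hglob
      · exfalso
        obtain ⟨b, hb⟩ := (hp (f a)).2.2.2.1 hfib a (Finset.mem_filter.mpr ⟨haA, rfl⟩)
        exact himg (Finset.mem_image.mpr
          ⟨(a, b), Finset.mem_biUnion.mpr ⟨f a, Finset.mem_univ _, hb⟩, rfl⟩)
      · have hUA : U1.card ≤ A.card := hcard1 ▸ Finset.card_le_card hsub1
        have hL' : (A \ U1.image Prod.fst).card = A.card - U1.card := by
          rw [Finset.card_sdiff_of_subset hsub1, hcard1]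
        have hLb : (B \ U1.image Prod.snd).card = B.card - U1.card := by
          rw [Finset.card_sdiff_of_subset hsub2, hcard2]
        have hle : (A \ U1.image Prod.fst).card ≤ (B \ U1.image Prod.snd).card := by omega
        obtain ⟨b, hb⟩ := c2sL hle a (Finset.mem_sdiff.mpr ⟨haA, himg⟩)
        exact ⟨b, Finset.mem_union_right _ hb⟩
  · intro b hbB hcond
    by_cases himg : b ∈ U1.image Prod.snd
    · obtain ⟨x, hxU, hxb⟩ := Finset.mem_image.mp himg
      refine ⟨x.1, ?_⟩
      have hxe : (x.1, b) = x := by rw [← hxb]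
      rw [hxe]
      exact Finset.mem_union_left _ hxU
    · rcases hcond with hfib | hglob
      · exfalso
        obtain ⟨a, hb⟩ := (hp (f b)).2.2.2.2 hfib b (Finset.mem_filter.mpr ⟨hbB, rfl⟩)
        exact himg (Finset.mem_image.mpr
          ⟨(a, b), Finset.mem_biUnion.mpr ⟨f b, Finset.mem_univ _, hb⟩, rfl⟩)
      · have hUB : U1.card ≤ B.card := hcard2 ▸ Finset.card_le_card hsub2
        have hL' : (A \ U1.image Prod.fst).card = A.card - U1.card := by
          rw [Finset.card_sdiff_of_subset hsub1, hcard1]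
        have hLb : (B \ U1.image Prod.snd).card = B.card - U1.card := by
          rw [Finset.card_sdiff_of_subset hsub2, hcard2]
        have hle : (B \ U1.image Prod.snd).card ≤ (A \ U1.image Prod.fst).card := by omega
        obtain ⟨a, ha⟩ := c2sR hle b (Finset.mem_sdiff.mpr ⟨hbB, himg⟩)
        exact ⟨a, Finset.mem_union_right _ ha⟩


lemma SPASTAux.mem_projAsg {M : Finset (S × P)} {p : P} {t : S} :
    t ∈ projAsg M p ↔ (t, p) ∈ M := by
  unfold projAsg
  constructor
  · intro h
    obtain ⟨⟨a, b⟩, hx, ht⟩ := Finset.mem_image.mp h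
    obtain ⟨hxM, hx2⟩ := Finset.mem_filter.mp hx
    simp only at ht hx2
    subst ht; subst hx2; exact hxM
  · intro h
    exact Finset.mem_image.mpr ⟨(t, p), Finset.mem_filter.mpr ⟨h, rfl⟩, rfl⟩

lemma SPASTAux.mem_lecAsg {I : SPAST S P L} {M : Finset (S × P)} {k : L} {t : S} :
    t ∈ lecAsg I M k ↔ ∃ q, (t, q) ∈ M ∧ I.lec q = k := by
  unfold lecAsg
  constructor
  · intro h
    obtain ⟨⟨a, b⟩, hx, ht⟩ := Finset.mem_image.mp h
    obtain ⟨hxM, hx2⟩ := Finset.mem_filter.mp hx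
    simp only at ht hx2
    subst ht
    exact ⟨b, hxM, hx2⟩
  · rintro ⟨q, hq, hk⟩
    exact Finset.mem_image.mpr ⟨(t, q), Finset.mem_filter.mpr ⟨hq, hk⟩, rfl⟩

lemma SPASTAux.card_projAsg (M : Finset (S × P)) (p : P) :
    (projAsg M p).card = (M.filter (fun x => x.2 = p)).card := by
  unfold projAsg
  apply Finset.card_image_of_injOn
  intro x hx y hy hxy
  have hx2 := (Finset.mem_filter.mp (Finset.mem_coe.mp hx)).2
  have hy2 := (Finset.mem_filter.mp (Finset.mem_coe.mp hy)).2
  exact Prod.ext_iff.mpr ⟨hxy, by rw [hx2, hy2]⟩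

lemma SPASTAux.card_lecAsg (I : SPAST S P L) {M : Finset (S × P)}
    (hu : ∀ s : S, ∀ p q : P, (s, p) ∈ M → (s, q) ∈ M → p = q) (k : L) :
    (lecAsg I M k).card = (M.filter (fun x => I.lec x.2 = k)).card := by
  unfold lecAsg
  apply Finset.card_image_of_injOn
  intro x hx y hy hxy
  have hx1 := (Finset.mem_filter.mp (Finset.mem_coe.mp hx)).1
  have hy1 := (Finset.mem_filter.mp (Finset.mem_coe.mp hy)).1
  have h1 : (x.1, x.2) ∈ M := by rw [Prod.mk.eta]; exact hx1
  have h2 : (x.1, y.2) ∈ M := by rw [hxy, Prod.mk.eta]; exact hy1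
  exact Prod.ext_iff.mpr ⟨hxy, hu x.1 x.2 y.2 h1 h2⟩

lemma SPASTAux.diff_filter_card_le {α : Type} [DecidableEq α] (N N' : Finset α)
    (pr : α → Prop) [DecidablePred pr]
    (h : (N'.filter pr).card ≤ (N.filter pr).card) :
    ((N' \ N).filter pr).card ≤ ((N \ N').filter pr).card := by
  have e1 : (N'.filter pr).card = ((N' \ N).filter pr).card + ((N' ∩ N).filter pr).card := by
    rw [← Finset.card_union_of_disjoint
      (Finset.disjoint_filter_filter (Finset.disjoint_sdiff_inter N' N)),
      ← Finset.filter_union, Finset.sdiff_union_inter]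
  have e2 : (N.filter pr).card = ((N \ N').filter pr).card + ((N ∩ N').filter pr).card := by
    rw [← Finset.card_union_of_disjoint
      (Finset.disjoint_filter_filter (Finset.disjoint_sdiff_inter N N')),
      ← Finset.filter_union, Finset.sdiff_union_inter]
  rw [Finset.inter_comm] at e1
  omega

lemma SPASTAux.exists_worst (I : SPAST S P L) (k : L) (T : Finset S) (hne : T.Nonempty)
    (hok : ∀ t ∈ T, ∃ p ∈ I.acc t, I.lec p = k) :
    ∃ t, WorstIn I k T t := by
  induction T using Finset.induction_on with
  | empty => exact absurd hne (by simp)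
  | @insert a T' ha ih =>
      rcases T'.eq_empty_or_nonempty with rfl | hne'
      · refine ⟨a, Finset.mem_insert_self a ∅, ?_⟩
        intro t' ht'
        rcases Finset.mem_insert.mp ht' with rfl | h
        · exact I.lRefl k t' (hok t' (Finset.mem_insert_self t' ∅))
        · exact absurd h (Finset.notMem_empty t')
      · obtain ⟨t, htT, hworst⟩ := ih hne' (fun t ht => hok t (Finset.mem_insert_of_mem ht))
        have oka := hok a (Finset.mem_insert_self a T')
        have okt := hok t (Finset.mem_insert_of_mem htT)
        rcases I.lTotal k a t oka okt with hat | hta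
        · refine ⟨t, Finset.mem_insert_of_mem htT, ?_⟩
          intro t' ht'
          rcases Finset.mem_insert.mp ht' with rfl | h
          · exact hat
          · exact hworst t' h
        · refine ⟨a, Finset.mem_insert_self a T', ?_⟩
          intro t' ht'
          rcases Finset.mem_insert.mp ht' with rfl | h
          · exact I.lRefl k t' oka
          · exact I.lTrans k t' t a (hok t' (Finset.mem_insert_of_mem h)) okt oka
              (hworst t' h) hta

/-- What super-stability of `M` gives at a pair `(s, p) ∉ M` such that `s` does not
strictly prefer her `M`-partner (if any) to `p`. -/
lemma SPASTAux.F1 (I : SPAST S P L) {M : Finset (S × P)} (hM : SuperStable I M)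
    {s : S} {p : P} (hacc : p ∈ I.acc s) (hnm : (s, p) ∉ M)
    (hinv : ∀ q : P, (s, q) ∈ M → ¬(I.sPref s q p ∧ ¬I.sPref s p q)) :
    ((projAsg M p).card = I.c p ∧
      ∀ y ∈ projAsg M p, I.lPref (I.lec p) y s ∧ ¬I.lPref (I.lec p) s y) ∨
    ((projAsg M p).card < I.c p ∧ (lecAsg I M (I.lec p)).card = I.d (I.lec p) ∧
      s ∉ lecAsg I M (I.lec p) ∧
      ∀ y ∈ lecAsg I M (I.lec p), I.lPref (I.lec p) y s ∧ ¬I.lPref (I.lec p) s y) := by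
  obtain ⟨hmatch, hstab⟩ := hM
  have hD : ¬(((projAsg M p).card < I.c p ∧ (lecAsg I M (I.lec p)).card < I.d (I.lec p)) ∨
      ((projAsg M p).card < I.c p ∧ (lecAsg I M (I.lec p)).card = I.d (I.lec p) ∧
        (s ∈ lecAsg I M (I.lec p) ∨
        ∃ t : S, WorstIn I (I.lec p) (lecAsg I M (I.lec p)) t ∧ I.lPref (I.lec p) s t)) ∨
      ((projAsg M p).card = I.c p ∧
        ∃ t : S, WorstIn I (I.lec p) (projAsg M p) t ∧ I.lPref (I.lec p) s t)) :=
    fun h => hstab s p ⟨hacc, hnm, hinv, h⟩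
  have hple : (projAsg M p).card ≤ I.c p := by
    rw [SPASTAux.card_projAsg]; exact hmatch.2.2.1 p
  have hlle : (lecAsg I M (I.lec p)).card ≤ I.d (I.lec p) := by
    rw [SPASTAux.card_lecAsg I hmatch.2.1]; exact hmatch.2.2.2 _
  have oks : ∃ q ∈ I.acc s, I.lec q = I.lec p := ⟨p, hacc, rfl⟩
  rcases eq_or_lt_of_le hple with hfull | hlt
  · left
    refine ⟨hfull, ?_⟩
    have hne : (projAsg M p).Nonempty := by
      rw [← Finset.card_pos, hfull]; exact I.cpos p
    have hok : ∀ t ∈ projAsg M p, ∃ q ∈ I.acc t, I.lec q = I.lec p := by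
      intro t ht
      exact ⟨p, hmatch.1 (t, p) (SPASTAux.mem_projAsg.mp ht), rfl⟩
    obtain ⟨t, hworst⟩ := SPASTAux.exists_worst I (I.lec p) _ hne hok
    have hnst : ¬I.lPref (I.lec p) s t := fun hst =>
      hD (Or.inr (Or.inr ⟨hfull, t, hworst, hst⟩))
    intro y hy
    have oky := hok y hy
    have okt := hok t hworst.1
    have hnsy : ¬I.lPref (I.lec p) s y := fun hsy =>
      hnst (I.lTrans _ s y t oks oky okt hsy (hworst.2 y hy))
    rcases I.lTotal _ y s oky oks with h | h
    · exact ⟨h, hnsy⟩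
    · exact absurd h hnsy
  · right
    have hlfull : (lecAsg I M (I.lec p)).card = I.d (I.lec p) := by
      by_contra hne
      exact hD (Or.inl ⟨hlt, lt_of_le_of_ne hlle hne⟩)
    have hii : ¬(s ∈ lecAsg I M (I.lec p) ∨
        ∃ t : S, WorstIn I (I.lec p) (lecAsg I M (I.lec p)) t ∧ I.lPref (I.lec p) s t) :=
      fun h => hD (Or.inr (Or.inl ⟨hlt, hlfull, h⟩))
    push_neg at hii
    obtain ⟨hs1, hs2⟩ := hii
    refine ⟨hlt, hlfull, hs1, ?_⟩
    have hne : (lecAsg I M (I.lec p)).Nonempty := by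
      rw [← Finset.card_pos, hlfull]; exact I.dpos _
    have hok : ∀ t ∈ lecAsg I M (I.lec p), ∃ q ∈ I.acc t, I.lec q = I.lec p := by
      intro t ht
      obtain ⟨q, hq, hkq⟩ := SPASTAux.mem_lecAsg.mp ht
      exact ⟨q, hmatch.1 (t, q) hq, hkq⟩
    obtain ⟨t, hworst⟩ := SPASTAux.exists_worst I (I.lec p) _ hne hok
    have hnst : ¬I.lPref (I.lec p) s t := fun hst => hs2 t hworst hst
    intro y hy
    have oky := hok y hy
    have okt := hok t hworst.1
    have hnsy : ¬I.lPref (I.lec p) s y := fun hsy =>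
      hnst (I.lTrans _ s y t oks oky okt hsy (hworst.2 y hy))
    rcases I.lTotal _ y s oky oks with h | h
    · exact ⟨h, hnsy⟩
    · exact absurd h hnsy

/-- What weak stability of `M'` gives at a pair `(t, q) ∉ M'` such that `t`
strictly prefers `q` to her `M'`-partner (if any). -/
lemma SPASTAux.F2 (I : SPAST S P L) {M' : Finset (S × P)} (hM' : WeaklyStable I M')
    {t : S} {q : P} (hacc : q ∈ I.acc t) (hnm : (t, q) ∉ M')
    (hinv : ∀ w : P, (t, w) ∈ M' → I.sPref t q w ∧ ¬I.sPref t w q) :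
    ((projAsg M' q).card = I.c q ∧ ∀ y ∈ projAsg M' q, I.lPref (I.lec q) y t) ∨
    ((projAsg M' q).card < I.c q ∧ (lecAsg I M' (I.lec q)).card = I.d (I.lec q) ∧
      t ∉ lecAsg I M' (I.lec q) ∧ ∀ y ∈ lecAsg I M' (I.lec q), I.lPref (I.lec q) y t) := by
  obtain ⟨hmatch, hstab⟩ := hM'
  have hD : ¬(((projAsg M' q).card < I.c q ∧ (lecAsg I M' (I.lec q)).card < I.d (I.lec q)) ∨
      ((projAsg M' q).card < I.c q ∧ (lecAsg I M' (I.lec q)).card = I.d (I.lec q) ∧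
        (t ∈ lecAsg I M' (I.lec q) ∨
        ∃ x : S, WorstIn I (I.lec q) (lecAsg I M' (I.lec q)) x ∧
          (I.lPref (I.lec q) t x ∧ ¬I.lPref (I.lec q) x t))) ∨
      ((projAsg M' q).card = I.c q ∧
        ∃ x : S, WorstIn I (I.lec q) (projAsg M' q) x ∧
          (I.lPref (I.lec q) t x ∧ ¬I.lPref (I.lec q) x t))) :=
    fun h => hstab t q ⟨hacc, hnm, hinv, h⟩
  have hple : (projAsg M' q).card ≤ I.c q := by
    rw [SPASTAux.card_projAsg]; exact hmatch.2.2.1 q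
  have hlle : (lecAsg I M' (I.lec q)).card ≤ I.d (I.lec q) := by
    rw [SPASTAux.card_lecAsg I hmatch.2.1]; exact hmatch.2.2.2 _
  have okt : ∃ w ∈ I.acc t, I.lec w = I.lec q := ⟨q, hacc, rfl⟩
  rcases eq_or_lt_of_le hple with hfull | hlt
  · left
    refine ⟨hfull, ?_⟩
    have hne : (projAsg M' q).Nonempty := by
      rw [← Finset.card_pos, hfull]; exact I.cpos q
    have hok : ∀ x ∈ projAsg M' q, ∃ w ∈ I.acc x, I.lec w = I.lec q := by
      intro x hx
      exact ⟨q, hmatch.1 (x, q) (SPASTAux.mem_projAsg.mp hx), rfl⟩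
    obtain ⟨x, hworst⟩ := SPASTAux.exists_worst I (I.lec q) _ hne hok
    have hnx : ¬(I.lPref (I.lec q) t x ∧ ¬I.lPref (I.lec q) x t) := fun hx =>
      hD (Or.inr (Or.inr ⟨hfull, x, hworst, hx⟩))
    have okx := hok x hworst.1
    have hxt : I.lPref (I.lec q) x t := by
      rcases I.lTotal _ t x okt okx with h | h
      · by_contra hc; exact hnx ⟨h, hc⟩
      · exact h
    intro y hy
    exact I.lTrans _ y x t (hok y hy) okx okt (hworst.2 y hy) hxt
  · right
    have hlfull : (lecAsg I M' (I.lec q)).card = I.d (I.lec q) := by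
      by_contra hne
      exact hD (Or.inl ⟨hlt, lt_of_le_of_ne hlle hne⟩)
    have hii : ¬(t ∈ lecAsg I M' (I.lec q) ∨
        ∃ x : S, WorstIn I (I.lec q) (lecAsg I M' (I.lec q)) x ∧
          (I.lPref (I.lec q) t x ∧ ¬I.lPref (I.lec q) x t)) :=
      fun h => hD (Or.inr (Or.inl ⟨hlt, hlfull, h⟩))
    push_neg at hii
    obtain ⟨hs1, hs2⟩ := hii
    refine ⟨hlt, hlfull, hs1, ?_⟩
    have hne : (lecAsg I M' (I.lec q)).Nonempty := by
      rw [← Finset.card_pos, hlfull]; exact I.dpos _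
    have hok : ∀ x ∈ lecAsg I M' (I.lec q), ∃ w ∈ I.acc x, I.lec w = I.lec q := by
      intro x hx
      obtain ⟨w, hw, hkw⟩ := SPASTAux.mem_lecAsg.mp hx
      exact ⟨w, hmatch.1 (x, w) hw, hkw⟩
    obtain ⟨x, hworst⟩ := SPASTAux.exists_worst I (I.lec q) _ hne hok
    have okx := hok x hworst.1
    have hxt : I.lPref (I.lec q) x t := by
      rcases I.lTotal _ t x okt okx with h | h
      · exact hs2 x hworst h
      · exact h
    intro y hy
    exact I.lTrans _ y x t (hok y hy) okx okt (hworst.2 y hy) hxt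


/-- A consistent partial pairing between the edge sets `M' \ M` and `M \ M'`:
partners belong to the same lecturer, pairs are within the same project unless
both relevant projects are undersubscribed, and an edge is guaranteed a partner
whenever its project (in the opposite matching) or its lecturer (in the opposite
matching) is full. -/
lemma SPASTAux.exists_R (I : SPAST S P L) (M M' : Finset (S × P))
    (hMm : I.IsMatching M) (hM'm : I.IsMatching M') :
    ∃ R : Finset ((S × P) × (S × P)),
      (∀ x ∈ R, x.1 ∈ M' \ M ∧ x.2 ∈ M \ M' ∧ I.lec x.1.2 = I.lec x.2.2) ∧
      (∀ x ∈ R, ∀ y ∈ R, x.1 = y.1 → x = y) ∧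
      (∀ x ∈ R, ∀ y ∈ R, x.2 = y.2 → x = y) ∧
      (∀ x ∈ R, x.1.2 = x.2.2 ∨
        ((projAsg M x.1.2).card < I.c x.1.2 ∧ (projAsg M' x.2.2).card < I.c x.2.2)) ∧
      (∀ e ∈ M' \ M, ((projAsg M e.2).card = I.c e.2 ∨
          (lecAsg I M (I.lec e.2)).card = I.d (I.lec e.2)) → ∃ d, (e, d) ∈ R) ∧
      (∀ d ∈ M \ M', ((projAsg M' d.2).card = I.c d.2 ∨
          (lecAsg I M' (I.lec d.2)).card = I.d (I.lec d.2)) → ∃ e, (e, d) ∈ R) := by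
  classical
  set A : L → Finset (S × P) := fun k => (M' \ M).filter (fun x => I.lec x.2 = k) with hA
  set B : L → Finset (S × P) := fun k => (M \ M').filter (fun x => I.lec x.2 = k) with hB
  have hTL : ∀ k : L, ∃ C : Finset ((S × P) × (S × P)),
      (∀ x ∈ C, x.1 ∈ A k ∧ x.2 ∈ B k) ∧
      (∀ x ∈ C, ∀ y ∈ C, x.1 = y.1 → x = y) ∧
      (∀ x ∈ C, ∀ y ∈ C, x.2 = y.2 → x = y) ∧
      (∀ x ∈ C, x.1.2 = x.2.2 ∨
        (((B k).filter (fun z => z.2 = x.1.2)).card < ((A k).filter (fun z => z.2 = x.1.2)).card ∧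
         ((A k).filter (fun z => z.2 = x.2.2)).card < ((B k).filter (fun z => z.2 = x.2.2)).card)) ∧
      (∀ a ∈ A k, (((A k).filter (fun z => z.2 = a.2)).card ≤ ((B k).filter (fun z => z.2 = a.2)).card
          ∨ (A k).card ≤ (B k).card) → ∃ b, (a, b) ∈ C) ∧
      (∀ b ∈ B k, (((B k).filter (fun z => z.2 = b.2)).card ≤ ((A k).filter (fun z => z.2 = b.2)).card
          ∨ (B k).card ≤ (A k).card) → ∃ a, (a, b) ∈ C) :=
    fun k => SPASTAux.exists_pairing_two_level (A k) (B k) Prod.snd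
  choose C hC using hTL
  have hAfib : ∀ (k : L) (p : P), I.lec p = k →
      (A k).filter (fun z => z.2 = p) = (M' \ M).filter (fun z => z.2 = p) := by
    intro k p hk
    rw [hA]
    ext z
    simp only [Finset.mem_filter]
    constructor
    · rintro ⟨⟨h1, h2⟩, h3⟩; exact ⟨h1, h3⟩
    · rintro ⟨h1, h3⟩; exact ⟨⟨h1, by rw [h3, hk]⟩, h3⟩
  have hBfib : ∀ (k : L) (p : P), I.lec p = k →
      (B k).filter (fun z => z.2 = p) = (M \ M').filter (fun z => z.2 = p) := by
    intro k p hk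
    rw [hB]
    ext z
    simp only [Finset.mem_filter]
    constructor
    · rintro ⟨⟨h1, h2⟩, h3⟩; exact ⟨h1, h3⟩
    · rintro ⟨h1, h3⟩; exact ⟨⟨h1, by rw [h3, hk]⟩, h3⟩
  have hfullM : ∀ p : P, (projAsg M p).card = I.c p →
      ((M' \ M).filter (fun z => z.2 = p)).card ≤ ((M \ M').filter (fun z => z.2 = p)).card := by
    intro p hp
    apply SPASTAux.diff_filter_card_le
    rw [SPASTAux.card_projAsg] at hp
    calc (M'.filter (fun z => z.2 = p)).card ≤ I.c p := hM'm.2.2.1 p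
      _ = (M.filter (fun z => z.2 = p)).card := hp.symm
  have hfullM' : ∀ q : P, (projAsg M' q).card = I.c q →
      ((M \ M').filter (fun z => z.2 = q)).card ≤ ((M' \ M).filter (fun z => z.2 = q)).card := by
    intro q hq
    apply SPASTAux.diff_filter_card_le
    rw [SPASTAux.card_projAsg] at hq
    calc (M.filter (fun z => z.2 = q)).card ≤ I.c q := hMm.2.2.1 q
      _ = (M'.filter (fun z => z.2 = q)).card := hq.symm
  have hlecM : ∀ k : L, (lecAsg I M k).card = I.d k → (A k).card ≤ (B k).card := by
    intro k hk
    apply SPASTAux.diff_filter_card_le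
    rw [SPASTAux.card_lecAsg I hMm.2.1] at hk
    calc (M'.filter (fun x => I.lec x.2 = k)).card
        ≤ I.d k := by rw [← SPASTAux.card_lecAsg I hM'm.2.1]; exact (by rw [SPASTAux.card_lecAsg I hM'm.2.1]; exact hM'm.2.2.2 k)
      _ = (M.filter (fun x => I.lec x.2 = k)).card := hk.symm
  have hlecM' : ∀ k : L, (lecAsg I M' k).card = I.d k → (B k).card ≤ (A k).card := by
    intro k hk
    apply SPASTAux.diff_filter_card_le
    rw [SPASTAux.card_lecAsg I hM'm.2.1] at hk
    calc (M.filter (fun x => I.lec x.2 = k)).card ≤ I.d k := hMm.2.2.2 k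
      _ = (M'.filter (fun x => I.lec x.2 = k)).card := hk.symm
  have hpleM : ∀ p : P, (projAsg M p).card ≤ I.c p := by
    intro p; rw [SPASTAux.card_projAsg]; exact hMm.2.2.1 p
  have hpleM' : ∀ p : P, (projAsg M' p).card ≤ I.c p := by
    intro p; rw [SPASTAux.card_projAsg]; exact hM'm.2.2.1 p
  refine ⟨Finset.univ.biUnion C, ?_, ?_, ?_, ?_, ?_, ?_⟩
  · intro x hx
    obtain ⟨k, -, hxk⟩ := Finset.mem_biUnion.mp hx
    obtain ⟨h1, h2⟩ := (hC k).1 x hxk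
    obtain ⟨h1a, h1b⟩ := Finset.mem_filter.mp h1
    obtain ⟨h2a, h2b⟩ := Finset.mem_filter.mp h2
    exact ⟨h1a, h2a, by rw [h1b, h2b]⟩
  · intro x hx y hy hxy
    obtain ⟨k, -, hxk⟩ := Finset.mem_biUnion.mp hx
    obtain ⟨k', -, hyk⟩ := Finset.mem_biUnion.mp hy
    have h1b := (Finset.mem_filter.mp ((hC k).1 x hxk).1).2
    have h2b := (Finset.mem_filter.mp ((hC k').1 y hyk).1).2
    rw [hxy] at h1b
    rw [h1b] at h2b
    subst h2b
    exact (hC k).2.1 x hxk y hyk hxy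
  · intro x hx y hy hxy
    obtain ⟨k, -, hxk⟩ := Finset.mem_biUnion.mp hx
    obtain ⟨k', -, hyk⟩ := Finset.mem_biUnion.mp hy
    have h1b := (Finset.mem_filter.mp ((hC k).1 x hxk).2).2
    have h2b := (Finset.mem_filter.mp ((hC k').1 y hyk).2).2
    rw [hxy] at h1b
    rw [h1b] at h2b
    subst h2b
    exact (hC k).2.2.1 x hxk y hyk hxy
  · intro x hx
    obtain ⟨k, -, hxk⟩ := Finset.mem_biUnion.mp hx
    have hk1 := (Finset.mem_filter.mp ((hC k).1 x hxk).1).2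
    have hk2 := (Finset.mem_filter.mp ((hC k).1 x hxk).2).2
    rcases (hC k).2.2.2.1 x hxk with h | ⟨h1, h2⟩
    · exact Or.inl h
    · right
      rw [hAfib k x.1.2 hk1, hBfib k x.1.2 hk1] at h1
      rw [hAfib k x.2.2 hk2, hBfib k x.2.2 hk2] at h2
      constructor
      · by_contra hc
        have heq : (projAsg M x.1.2).card = I.c x.1.2 :=
          le_antisymm (hpleM x.1.2) (not_lt.mp hc)
        exact absurd (hfullM x.1.2 heq) (not_le.mpr h1)
      · by_contra hc
        have heq : (projAsg M' x.2.2).card = I.c x.2.2 :=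
          le_antisymm (hpleM' x.2.2) (not_lt.mp hc)
        exact absurd (hfullM' x.2.2 heq) (not_le.mpr h2)
  · intro e he hor
    have heA : e ∈ A (I.lec e.2) := Finset.mem_filter.mpr ⟨he, rfl⟩
    have hcond : (((A (I.lec e.2)).filter (fun z => z.2 = e.2)).card ≤
        ((B (I.lec e.2)).filter (fun z => z.2 = e.2)).card) ∨
        (A (I.lec e.2)).card ≤ (B (I.lec e.2)).card := by
      rcases hor with h | h
      · left
        rw [hAfib _ e.2 rfl, hBfib _ e.2 rfl]
        exact hfullM e.2 h
      · exact Or.inr (hlecM _ h)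
    obtain ⟨b, hb⟩ := (hC (I.lec e.2)).2.2.2.2.1 e heA hcond
    exact ⟨b, Finset.mem_biUnion.mpr ⟨I.lec e.2, Finset.mem_univ _, hb⟩⟩
  · intro d hd hor
    have hdB : d ∈ B (I.lec d.2) := Finset.mem_filter.mpr ⟨hd, rfl⟩
    have hcond : (((B (I.lec d.2)).filter (fun z => z.2 = d.2)).card ≤
        ((A (I.lec d.2)).filter (fun z => z.2 = d.2)).card) ∨
        (B (I.lec d.2)).card ≤ (A (I.lec d.2)).card := by
      rcases hor with h | h
      · left
        rw [hAfib _ d.2 rfl, hBfib _ d.2 rfl]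
        exact hfullM' d.2 h
      · exact Or.inr (hlecM' _ h)
    obtain ⟨a, ha⟩ := (hC (I.lec d.2)).2.2.2.2.2 d hdB hcond
    exact ⟨a, Finset.mem_biUnion.mpr ⟨I.lec d.2, Finset.mem_univ _, ha⟩⟩


/-- If a super-stable matching `M` exists, every student matched in a weakly
stable matching `M'` is matched in `M`. -/
lemma SPASTAux.dir1 (I : SPAST S P L) {M M' : Finset (S × P)}
    (hM : SuperStable I M) (hM' : WeaklyStable I M')
    (s0 : S) (p0 : P) (h0 : (s0, p0) ∈ M') (hun : ∀ p : P, (s0, p) ∉ M) : False := by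
  classical
  obtain ⟨R, hRmem, hRl, hRr, hRproj, hRsatL, hRsatR⟩ :=
    SPASTAux.exists_R I M M' hM.1 hM'.1
  set E : Finset (S × P) := (M' \ M).filter
    (fun e => ∀ q : P, (e.1, q) ∈ M → ¬(I.sPref e.1 q e.2 ∧ ¬I.sPref e.1 e.2 q)) with hE
  have key : ∀ e ∈ E, ∃ e', e' ∈ E ∧ ∃ d, (e, d) ∈ R ∧ e'.1 = d.1 := by
    intro e heE
    obtain ⟨heD, hinv⟩ := Finset.mem_filter.mp heE
    have heM' : e ∈ M' := (Finset.mem_sdiff.mp heD).1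
    have heNM : e ∉ M := (Finset.mem_sdiff.mp heD).2
    have hacc : e.2 ∈ I.acc e.1 := hM'.1.1 e heM'
    have hnm : (e.1, e.2) ∉ M := by rwa [Prod.mk.eta]
    have hF1 := SPASTAux.F1 I hM hacc hnm hinv
    have hor : (projAsg M e.2).card = I.c e.2 ∨
        (lecAsg I M (I.lec e.2)).card = I.d (I.lec e.2) := by
      rcases hF1 with ⟨h, -⟩ | ⟨-, h, -⟩
      · exact Or.inl h
      · exact Or.inr h
    obtain ⟨d, hdR⟩ := hRsatL e heD hor
    obtain ⟨heD', hdD, hdk⟩ := hRmem (e, d) hdR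
    have hdM : d ∈ M := (Finset.mem_sdiff.mp hdD).1
    have hdNM' : d ∉ M' := (Finset.mem_sdiff.mp hdD).2
    have hdMe : (d.1, d.2) ∈ M := by rwa [Prod.mk.eta]
    have hts : I.lPref (I.lec e.2) d.1 e.1 ∧ ¬I.lPref (I.lec e.2) e.1 d.1 := by
      rcases hF1 with ⟨hfull, hall⟩ | ⟨hlt, hlf, hsn, hall⟩
      · have hsame : e.2 = d.2 := by
          rcases hRproj (e, d) hdR with h | ⟨h1, -⟩
          · exact h
          · exact (ne_of_lt h1 hfull).elim
        exact hall d.1 (by rw [SPASTAux.mem_projAsg, hsame]; exact hdMe)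
      · exact hall d.1 (SPASTAux.mem_lecAsg.mpr ⟨d.2, hdMe, hdk.symm⟩)
    by_cases hY : ∀ w : P, (d.1, w) ∈ M' → I.sPref d.1 d.2 w ∧ ¬I.sPref d.1 w d.2
    · exfalso
      have hacc2 : d.2 ∈ I.acc d.1 := hM.1.1 d hdM
      have hnm2 : (d.1, d.2) ∉ M' := by rwa [Prod.mk.eta]
      have hF2 := SPASTAux.F2 I hM' hacc2 hnm2 hY
      rcases hF2 with ⟨hfull', hall'⟩ | ⟨hlt', hlf', hsn', hall'⟩
      · have hsame : e.2 = d.2 := by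
          rcases hRproj (e, d) hdR with h | ⟨-, h2⟩
          · exact h
          · exact (ne_of_lt h2 hfull').elim
        have he1 : e.1 ∈ projAsg M' d.2 := by
          rw [SPASTAux.mem_projAsg, ← hsame]
          rwa [Prod.mk.eta]
        have hp := hall' e.1 he1
        rw [← hdk] at hp
        exact hts.2 hp
      · have he1 : e.1 ∈ lecAsg I M' (I.lec d.2) := by
          rw [SPASTAux.mem_lecAsg]
          exact ⟨e.2, by rwa [Prod.mk.eta], hdk⟩
        have hp := hall' e.1 he1
        rw [← hdk] at hp
        exact hts.2 hp
    · push_neg at hY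
      obtain ⟨w, hw, hnsp⟩ := hY
      refine ⟨(d.1, w), ?_, d, hdR, rfl⟩
      rw [hE]
      apply Finset.mem_filter.mpr
      constructor
      · apply Finset.mem_sdiff.mpr
        refine ⟨hw, ?_⟩
        intro hmem
        have hwe : w = d.2 := hM.1.2.1 d.1 w d.2 hmem hdMe
        rw [hwe] at hw
        exact hdNM' (by rwa [Prod.mk.eta] at hw)
      · intro q hq
        have hqe : q = d.2 := hM.1.2.1 d.1 q d.2 hq hdMe
        rw [hqe]
        exact fun hcon => hcon.2 (hnsp hcon.1)
  choose! N hN1 hN2 using key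
  have hinj : ∀ x ∈ E, ∀ y ∈ E, N x = N y → x = y := by
    intro x hx y hy hxy
    obtain ⟨dx, hdx, hdx1⟩ := hN2 x hx
    obtain ⟨dy, hdy, hdy1⟩ := hN2 y hy
    have hd1 : dx.1 = dy.1 := by rw [← hdx1, ← hdy1, hxy]
    have hdxM : dx ∈ M := (Finset.mem_sdiff.mp (hRmem (x, dx) hdx).2.1).1
    have hdyM : dy ∈ M := (Finset.mem_sdiff.mp (hRmem (y, dy) hdy).2.1).1
    have hd2 : dx.2 = dy.2 := by
      apply hM.1.2.1 dx.1 dx.2 dy.2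
      · rwa [Prod.mk.eta]
      · rw [hd1]; rwa [Prod.mk.eta]
    have hdd : dx = dy := Prod.ext_iff.mpr ⟨hd1, hd2⟩
    have heq := hRr (x, dx) hdx (y, dy) hdy hdd
    exact congrArg Prod.fst heq
  have himage : E.image N = E := by
    apply Finset.eq_of_subset_of_card_le
    · intro z hz
      obtain ⟨e, he, rfl⟩ := Finset.mem_image.mp hz
      exact hN1 e he
    · rw [Finset.card_image_of_injOn (fun x hx y hy h => hinj x hx y hy h)]
  have he0 : (s0, p0) ∈ E := by
    rw [hE]
    apply Finset.mem_filter.mpr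
    refine ⟨Finset.mem_sdiff.mpr ⟨h0, hun p0⟩, ?_⟩
    intro q hq
    exact absurd hq (hun q)
  rw [← himage] at he0
  obtain ⟨e, heE, hNe⟩ := Finset.mem_image.mp he0
  obtain ⟨d, hdR, hd1⟩ := hN2 e heE
  have hdM : d ∈ M := (Finset.mem_sdiff.mp (hRmem (e, d) hdR).2.1).1
  have hfin : (s0, d.2) ∈ M := by
    have h1 : (N e).1 = s0 := by rw [hNe]
    rw [← h1, hd1]
    rwa [Prod.mk.eta]
  exact hun d.2 hfin

/-- If a super-stable matching `M` exists, every student matched in `M` is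
matched in any weakly stable matching `M'`. -/
lemma SPASTAux.dir2 (I : SPAST S P L) {M M' : Finset (S × P)}
    (hM : SuperStable I M) (hM' : WeaklyStable I M')
    (s0 : S) (q0 : P) (h0 : (s0, q0) ∈ M) (hun : ∀ p : P, (s0, p) ∉ M') : False := by
  classical
  obtain ⟨R, hRmem, hRl, hRr, hRproj, hRsatL, hRsatR⟩ :=
    SPASTAux.exists_R I M M' hM.1 hM'.1
  set E : Finset (S × P) := (M \ M').filter
    (fun d => ∀ w : P, (d.1, w) ∈ M' → I.sPref d.1 d.2 w ∧ ¬I.sPref d.1 w d.2) with hE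
  have key : ∀ d ∈ E, ∃ d', d' ∈ E ∧ ∃ e, (e, d) ∈ R ∧ d'.1 = e.1 := by
    intro d hdE
    obtain ⟨hdD, hinv⟩ := Finset.mem_filter.mp hdE
    have hdM : d ∈ M := (Finset.mem_sdiff.mp hdD).1
    have hdNM' : d ∉ M' := (Finset.mem_sdiff.mp hdD).2
    have hdMe : (d.1, d.2) ∈ M := by rwa [Prod.mk.eta]
    have hacc : d.2 ∈ I.acc d.1 := hM.1.1 d hdM
    have hnm : (d.1, d.2) ∉ M' := by rwa [Prod.mk.eta]
    have hF2 := SPASTAux.F2 I hM' hacc hnm hinv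
    have hor : (projAsg M' d.2).card = I.c d.2 ∨
        (lecAsg I M' (I.lec d.2)).card = I.d (I.lec d.2) := by
      rcases hF2 with ⟨h, -⟩ | ⟨-, h, -⟩
      · exact Or.inl h
      · exact Or.inr h
    obtain ⟨e, heR⟩ := hRsatR d hdD hor
    obtain ⟨heD', hdD2, hek⟩ := hRmem (e, d) heR
    have heM' : e ∈ M' := (Finset.mem_sdiff.mp heD').1
    have heNM : e ∉ M := (Finset.mem_sdiff.mp heD').2
    have heMe : (e.1, e.2) ∈ M' := by rwa [Prod.mk.eta]
    have hut : I.lPref (I.lec d.2) e.1 d.1 := by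
      rcases hF2 with ⟨hfull', hall'⟩ | ⟨hlt', hlf', hsn', hall'⟩
      · have hsame : e.2 = d.2 := by
          rcases hRproj (e, d) heR with h | ⟨-, h2⟩
          · exact h
          · exact (ne_of_lt h2 hfull').elim
        exact hall' e.1 (by rw [SPASTAux.mem_projAsg, ← hsame]; exact heMe)
      · exact hall' e.1 (SPASTAux.mem_lecAsg.mpr ⟨e.2, heMe, hek⟩)
    by_cases hX : ∀ r : P, (e.1, r) ∈ M → ¬(I.sPref e.1 r e.2 ∧ ¬I.sPref e.1 e.2 r)
    · exfalso
      have hacc2 : e.2 ∈ I.acc e.1 := hM'.1.1 e heM'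
      have hnm2 : (e.1, e.2) ∉ M := by rwa [Prod.mk.eta]
      have hF1 := SPASTAux.F1 I hM hacc2 hnm2 hX
      rcases hF1 with ⟨hfull, hall⟩ | ⟨hlt, hlf, hsn, hall⟩
      · have hsame : e.2 = d.2 := by
          rcases hRproj (e, d) heR with h | ⟨h1, -⟩
          · exact h
          · exact (ne_of_lt h1 hfull).elim
        have hd1mem : d.1 ∈ projAsg M e.2 := by
          rw [SPASTAux.mem_projAsg, hsame]; exact hdMe
        have hp := (hall d.1 hd1mem).2
        rw [hek] at hp
        exact hp hut
      · have hd1mem : d.1 ∈ lecAsg I M (I.lec e.2) := by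
          rw [SPASTAux.mem_lecAsg]
          exact ⟨d.2, hdMe, hek.symm⟩
        have hp := (hall d.1 hd1mem).2
        rw [hek] at hp
        exact hp hut
    · push_neg at hX
      obtain ⟨r, hr, hstr⟩ := hX
      refine ⟨(e.1, r), ?_, e, heR, rfl⟩
      rw [hE]
      apply Finset.mem_filter.mpr
      constructor
      · apply Finset.mem_sdiff.mpr
        refine ⟨hr, ?_⟩
        intro hmem
        have hre : r = e.2 := hM'.1.2.1 e.1 r e.2 hmem heMe
        rw [hre] at hr
        exact heNM (by rwa [Prod.mk.eta] at hr)
      · intro w hw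
        have hwe : w = e.2 := hM'.1.2.1 e.1 w e.2 hw heMe
        rw [hwe]
        exact hstr
  choose! N hN1 hN2 using key
  have hinj : ∀ x ∈ E, ∀ y ∈ E, N x = N y → x = y := by
    intro x hx y hy hxy
    obtain ⟨ex, hex, hex1⟩ := hN2 x hx
    obtain ⟨ey, hey, hey1⟩ := hN2 y hy
    have he1 : ex.1 = ey.1 := by rw [← hex1, ← hey1, hxy]
    have hexM : ex ∈ M' := (Finset.mem_sdiff.mp (hRmem (ex, x) hex).1).1
    have heyM : ey ∈ M' := (Finset.mem_sdiff.mp (hRmem (ey, y) hey).1).1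
    have he2 : ex.2 = ey.2 := by
      apply hM'.1.2.1 ex.1 ex.2 ey.2
      · rwa [Prod.mk.eta]
      · rw [he1]; rwa [Prod.mk.eta]
    have hee : ex = ey := Prod.ext_iff.mpr ⟨he1, he2⟩
    have heq := hRl (ex, x) hex (ey, y) hey hee
    exact congrArg Prod.snd heq
  have himage : E.image N = E := by
    apply Finset.eq_of_subset_of_card_le
    · intro z hz
      obtain ⟨e, he, rfl⟩ := Finset.mem_image.mp hz
      exact hN1 e he
    · rw [Finset.card_image_of_injOn (fun x hx y hy h => hinj x hx y hy h)]
  have he0 : (s0, q0) ∈ E := by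
    rw [hE]
    apply Finset.mem_filter.mpr
    refine ⟨Finset.mem_sdiff.mpr ⟨h0, hun q0⟩, ?_⟩
    intro w hw
    exact absurd hw (hun w)
  rw [← himage] at he0
  obtain ⟨d, hdE, hNd⟩ := Finset.mem_image.mp he0
  obtain ⟨e, heR, he1⟩ := hN2 d hdE
  have heM' : e ∈ M' := (Finset.mem_sdiff.mp (hRmem (e, d) heR).1).1
  have hfin : (s0, e.2) ∈ M' := by
    have h1 : (N d).1 = s0 := by rw [hNd]
    rw [← h1, he1]
    rwa [Prod.mk.eta]
  exact hun e.2 hfin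


end Aux

open SPAST in
theorem weakly_stable_same_unmatched_of_super_stable_exists {S P L : Type} [Fintype S] [Fintype P] [Fintype L]
    [DecidableEq S] [DecidableEq P] [DecidableEq L]
    (I : SPAST S P L) (hss : ∃ M : Finset (S × P), SuperStable I M)
    (M1 M2 : Finset (S × P)) (h1 : WeaklyStable I M1) (h2 : WeaklyStable I M2) :
    ∀ s : S, (∀ p : P, (s, p) ∉ M1) ↔ (∀ p : P, (s, p) ∉ M2) := by
  obtain ⟨M, hM⟩ := hss
  intro s
  constructor
  · intro h1un p hp
    have hMun : ∀ q : P, (s, q) ∉ M := fun q hq => SPASTAux.dir2 I hM h1 s q hq h1un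
    exact SPASTAux.dir1 I hM h2 s p hp hMun
  · intro h2un p hp
    have hMun : ∀ q : P, (s, q) ∉ M := fun q hq => SPASTAux.dir2 I hM h2 s q hq h2un
    exact SPASTAux.dir1 I hM h1 s p hp hMun
end
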